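/- arXiv:1601.06390 — 2 statements merged into one kernel-verified Lean document; each statement's English description precedes it below -/
import Mathlib

section
/- Let α be a composition with ℓ(α) ≤ n. Then (1) the set of quasi-ribbon words in 𝒜_n^* of shape α is exactly the vertex set of a single connected component of the quasi-crystal graph Γ(hypo_n); and (2) this connected component contains a unique highest-weight word, namely the column reading of the quasi-ribbon tableau of shape α whose j-th row consists entirely of symbols j, for j = 1,...,ℓ(α). -/
/-!
Common setup: words over the alphabet `𝒜_n = {1,…,n}` (modelled as `List ℕ`),
quasi-Kashiwara operators, the quasi-crystal graph, Kashiwara operators,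
quasi-ribbon words, and the hypoplactic congruence.
-/

namespace HypoCrystal

noncomputable section
open scoped Classical

/-- `u` is a word over the alphabet `𝒜_n = {1,…,n}`. -/
def IsWord (n : ℕ) (u : List ℕ) : Prop := ∀ a ∈ u, 1 ≤ a ∧ a ≤ n

/-- `u` has an `i`-inversion: some letter `i+1` occurs strictly to the left of some letter `i`. -/
def HasInv (i : ℕ) (u : List ℕ) : Prop :=
  ∃ v w x : List ℕ, u = v ++ (i + 1) :: w ++ i :: x

/-- Replace the first (leftmost) occurrence of `a` by `b`, if any; otherwise `none`. -/
def replaceFirst (a b : ℕ) : List ℕ → Option (List ℕ)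
  | [] => none
  | x :: xs => if x = a then some (b :: xs) else (replaceFirst a b xs).map (x :: ·)

/-- The quasi-Kashiwara raising operator `e_i` (partial map, `none` = undefined):
if `u` has an `i`-inversion it is undefined; otherwise it replaces the leftmost
letter `i+1` by `i` (undefined if there is no letter `i+1`). -/
def qe (i : ℕ) (u : List ℕ) : Option (List ℕ) :=
  if HasInv i u then none else replaceFirst (i + 1) i u

/-- The quasi-Kashiwara lowering operator `f_i` (partial map, `none` = undefined):
if `u` has an `i`-inversion it is undefined; otherwise it replaces the rightmost
letter `i` by `i+1` (undefined if there is no letter `i`). -/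
def qf (i : ℕ) (u : List ℕ) : Option (List ℕ) :=
  if HasInv i u then none else (replaceFirst i (i + 1) u.reverse).map List.reverse

/-- Weight of a word: `wt u a` is the number of occurrences of the letter `a` in `u`. -/
def wt (u : List ℕ) : ℕ → ℕ := fun a => u.count a

/-- There is an edge labelled `i` from `u` to `v` in the quasi-crystal graph `Γ(hypo_n)`. -/
def Edge (n i : ℕ) (u v : List ℕ) : Prop := 1 ≤ i ∧ i < n ∧ qf i u = some v

/-- `u` and `v` are adjacent (in the underlying undirected graph) in `Γ(hypo_n)`. -/
def Adj (n : ℕ) (u v : List ℕ) : Prop := ∃ i, Edge n i u v ∨ Edge n i v u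

/-- `v` lies in the connected component `Γ(hypo_n, u)` of `u` in the quasi-crystal graph. -/
def SameComp (n : ℕ) : List ℕ → List ℕ → Prop := Relation.ReflTransGen (Adj n)

/-- `u` is a highest-weight word: no raising operator `e_i` is defined on `u`. -/
def HighestWeight (n : ℕ) (u : List ℕ) : Prop := ∀ i, 1 ≤ i → i < n → qe i u = none

/-- `θ` is a quasi-crystal isomorphism from the component of `u` onto the component of `v`:
a weight-preserving bijection preserving labelled edges in both directions. -/
def IsQCIso (n : ℕ) (u v : List ℕ) (θ : List ℕ → List ℕ) : Prop :=
  Set.BijOn θ {x | SameComp n u x} {y | SameComp n v y} ∧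
  (∀ x, SameComp n u x → wt (θ x) = wt x) ∧
  (∀ x y, SameComp n u x → SameComp n u y → ∀ i, (Edge n i x y ↔ Edge n i (θ x) (θ y)))

/-- `u ∼ v`: there is a quasi-crystal isomorphism between the components of `u` and `v`
taking `u` to `v`. -/
def Sim (n : ℕ) (u v : List ℕ) : Prop :=
  ∃ θ : List ℕ → List ℕ, IsQCIso n u v θ ∧ θ u = v

/-- The standardization of `u`: position `k` receives the rank (starting at 1) of the
pair `(u_k, k)` among all pairs `(u_l, l)` ordered lexicographically. -/
def std (u : List ℕ) : List ℕ :=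
  (List.range u.length).map fun k =>
    1 + ((List.range u.length).filter fun l =>
      u.getD l 0 < u.getD k 0 ∨ (u.getD l 0 = u.getD k 0 ∧ l < k)).length

/-- The maximal strictly decreasing factors of a word (the columns of its
quasi-ribbon tabloid, each read bottom-to-top). -/
def decFactors : List ℕ → List (List ℕ)
  | [] => []
  | a :: rest =>
    match decFactors rest with
    | (b :: f) :: fs => if b < a then (a :: b :: f) :: fs else [a] :: (b :: f) :: fs
    | l => [a] :: l

/-- `w` is a quasi-ribbon word: its quasi-ribbon tabloid is a quasi-ribbon tableau,
i.e. the bottom entry of each column is ≤ the top entry of the next column. -/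
def IsQRWord (w : List ℕ) : Prop :=
  (decFactors w).Chain' fun c d => c.headD 0 ≤ d.getLastD 0

/-- Row lengths (top to bottom) of the ribbon diagram whose column heights
(left to right) are given. -/
def rowLengths : List ℕ → List ℕ
  | [] => []
  | [d] => List.replicate d 1
  | d :: e :: rest =>
    List.replicate (d - 1) 1 ++
      (match rowLengths (e :: rest) with
       | [] => [1]
       | r :: rs => (r + 1) :: rs)

/-- The shape (as a composition, listed top row first) of the quasi-ribbon tabloid of `w`. -/
def shape (w : List ℕ) : List ℕ := rowLengths ((decFactors w).map List.length)

/-- Columns of the quasi-ribbon tableau of shape `α` whose `j`-th row consists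
entirely of symbols `j`, where rows are labelled starting from `j₀`. -/
def hwCols : List ℕ → ℕ → List (List ℕ)
  | [], _ => []
  | [a], j => List.replicate a [j]
  | a :: b :: rest, j =>
    List.replicate (a - 1) [j] ++
      (match hwCols (b :: rest) (j + 1) with
       | [] => [[j]]
       | c :: cs => (c ++ [j]) :: cs)

/-- The column reading of the quasi-ribbon tableau of shape `α` whose `j`-th row
consists entirely of symbols `j`. -/
def hwQR (α : List ℕ) : List ℕ := (hwCols α 1).flatten

/-- The defining relations `R_hypo` of the hypoplactic monoid of rank `n`. -/
inductive HypoRel (n : ℕ) : List ℕ → List ℕ → Prop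
  | knuth1 {a b c : ℕ} : 1 ≤ a → a ≤ b → b < c → c ≤ n → HypoRel n [a, c, b] [c, a, b]
  | knuth2 {a b c : ℕ} : 1 ≤ a → a < b → b ≤ c → c ≤ n → HypoRel n [b, a, c] [b, c, a]
  | quasi1 {a b c d : ℕ} : 1 ≤ a → a ≤ b → b < c → c ≤ d → d ≤ n →
      HypoRel n [c, a, d, b] [a, c, b, d]
  | quasi2 {a b c d : ℕ} : 1 ≤ a → a < b → b ≤ c → c < d → d ≤ n →
      HypoRel n [b, d, a, c] [d, b, c, a]

/-- The hypoplactic congruence `≡_hypo`: the congruence on the free monoid generated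
by the relations `R_hypo`. -/
inductive HypoCong (n : ℕ) : List ℕ → List ℕ → Prop
  | of {u v} : HypoRel n u v → HypoCong n u v
  | refl (u) : HypoCong n u u
  | symm {u v} : HypoCong n u v → HypoCong n v u
  | trans {u v w} : HypoCong n u v → HypoCong n v w → HypoCong n u w
  | append {u v u' v'} : HypoCong n u v → HypoCong n u' v' →
      HypoCong n (u ++ u') (v ++ v')

/-- The signature word of `u` for index `i`: each letter `i` becomes `(position, true)`
(that is, `+`) and each letter `i+1` becomes `(position, false)` (that is, `−`). -/
def signWord (i : ℕ) (u : List ℕ) : List (ℕ × Bool) :=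
  (u.zipIdx.map Prod.swap).filterMap fun pa =>
    if pa.2 = i then some (pa.1, true)
    else if pa.2 = i + 1 then some (pa.1, false) else none

/-- Iteratively delete factors `−+` from a signature word, producing the reduced
word `+^p −^q`. -/
def reduce : List (ℕ × Bool) → List (ℕ × Bool)
  | [] => []
  | x :: rest =>
    match reduce rest with
    | y :: rest' => if x.2 = false ∧ y.2 = true then rest' else x :: y :: rest'
    | [] => [x]

/-- The Kashiwara raising operator `ẽ_i`, computed by the signature rule: change to `i`
the letter `i+1` corresponding to the leftmost `−` of the reduced signature word. -/
def KE (i : ℕ) (u : List ℕ) : Option (List ℕ) :=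
  (((reduce (signWord i u)).filter fun x => !x.2).head?).map fun x => u.set x.1 i

/-- The Kashiwara lowering operator `f̃_i`, computed by the signature rule: change to `i+1`
the letter `i` corresponding to the rightmost `+` of the reduced signature word. -/
def KF (i : ℕ) (u : List ℕ) : Option (List ℕ) :=
  (((reduce (signWord i u)).filter fun x => x.2).getLast?).map fun x => u.set x.1 (i + 1)

/-- The Schützenberger involution on `𝒜_n^*`: reverse the word and replace each
letter `a` by `n − a + 1`. -/
def sharp (n : ℕ) (u : List ℕ) : List ℕ := u.reverse.map fun a => n + 1 - a

/-- The largest letter occurring in `u` (0 for the empty word). -/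
def maxLetter (u : List ℕ) : ℕ := u.foldr max 0

/-- `β` is coarser than `α` (`β ⪯ α`): they have the same weight and every proper
partial sum of `β` is a proper partial sum of `α`. -/
def Coarser (β α : List ℕ) : Prop :=
  β.sum = α.sum ∧ ∀ p < β.length, ∃ m < α.length, (β.take p).sum = (α.take m).sum

end
end HypoCrystal

namespace HypoCrystal
section Aux
open List

@[simp] theorem chain'_iff_isChain {β : Type*} {R : β → β → Prop} {l : List β} :
    List.Chain' R l ↔ List.IsChain R l := Iff.rfl

theorem replaceFirst_eq_none {a b : ℕ} {u : List ℕ} : replaceFirst a b u = none ↔ a ∉ u := by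
  induction u with
  | nil => simp [replaceFirst]
  | cons x xs ih =>
    by_cases hx : x = a
    · subst hx; simp [replaceFirst]
    · simp [replaceFirst, hx, ih, Ne.symm hx]

theorem replaceFirst_append_not_mem {a b : ℕ} (u₁ u₂ : List ℕ) (h : a ∉ u₁) :
    replaceFirst a b (u₁ ++ a :: u₂) = some (u₁ ++ b :: u₂) := by
  induction u₁ with
  | nil => simp [replaceFirst]
  | cons x xs ih =>
    have hx : x ≠ a := fun hh => h (by simp [hh])
    have h' : a ∉ xs := fun hh => h (by simp [hh])
    simp [replaceFirst, hx, ih h']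

theorem replaceFirst_eq_some_elim {a b : ℕ} {u v : List ℕ} (h : replaceFirst a b u = some v) :
    ∃ u₁ u₂, a ∉ u₁ ∧ u = u₁ ++ a :: u₂ ∧ v = u₁ ++ b :: u₂ := by
  induction u generalizing v with
  | nil => simp [replaceFirst] at h
  | cons x xs ih =>
    by_cases hx : x = a
    · subst hx
      have h' : v = b :: xs := by simpa [replaceFirst] using h.symm
      exact ⟨[], xs, by simp, by simp, by simp [h']⟩
    · simp only [replaceFirst, if_neg hx, Option.map_eq_some_iff] at h
      obtain ⟨w, hw, rfl⟩ := h
      obtain ⟨u₁, u₂, h1, h2, h3⟩ := ih hw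
      exact ⟨x :: u₁, u₂, by simp [h1, Ne.symm hx], by simp [h2], by simp [h3]⟩

theorem hasInv_iff_sublist {i : ℕ} {u : List ℕ} : HasInv i u ↔ [i + 1, i] <+ u := by
  constructor
  · rintro ⟨v, w, x, rfl⟩
    have h1 : [i + 1] <+ v ++ [i + 1] := sublist_append_right _ _
    have h2 : [i] <+ w ++ i :: x := List.singleton_sublist.2 (by simp)
    have := h1.append h2
    simpa [List.append_assoc] using this
  · intro h
    rw [List.cons_sublist_iff] at h
    obtain ⟨r₁, r₂, rfl, hmem, hsub⟩ := h
    rw [List.singleton_sublist] at hsub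
    obtain ⟨p, q, rfl⟩ := List.append_of_mem hmem
    obtain ⟨s, t, rfl⟩ := List.append_of_mem hsub
    exact ⟨p, q ++ s, t, by simp⟩

theorem HasInv.mem_left {i : ℕ} {u : List ℕ} (h : HasInv i u) : i + 1 ∈ u := by
  rw [hasInv_iff_sublist] at h
  exact h.mem (by simp)

theorem HasInv.mem_right {i : ℕ} {u : List ℕ} (h : HasInv i u) : i ∈ u := by
  rw [hasInv_iff_sublist] at h
  exact h.mem (by simp)

theorem qe_eq_none_iff {i : ℕ} {u : List ℕ} : qe i u = none ↔ HasInv i u ∨ (i + 1) ∉ u := by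
  unfold qe
  by_cases h : HasInv i u
  · simp [h]
  · simp [h, replaceFirst_eq_none]

theorem qf_eq_some_iff {i : ℕ} {u v : List ℕ} :
    qf i u = some v ↔
      ¬HasInv i u ∧ ∃ u₁ u₂, u = u₁ ++ i :: u₂ ∧ i ∉ u₂ ∧ v = u₁ ++ (i + 1) :: u₂ := by
  by_cases h : HasInv i u
  · simp [qf, h]
  · rw [qf, if_neg h, Option.map_eq_some_iff]
    simp only [h, not_false_iff, true_and]
    constructor
    · rintro ⟨r, hr, rfl⟩
      obtain ⟨r₁, r₂, hni, he, rfl⟩ := replaceFirst_eq_some_elim hr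
      refine ⟨r₂.reverse, r₁.reverse, ?_, by simpa using hni, by simp⟩
      have := congrArg List.reverse he
      simpa using this
    · rintro ⟨u₁, u₂, rfl, hmem, rfl⟩
      refine ⟨u₂.reverse ++ (i + 1) :: u₁.reverse, ?_, by simp⟩
      rw [show (u₁ ++ i :: u₂).reverse = u₂.reverse ++ i :: u₁.reverse by simp]
      exact replaceFirst_append_not_mem _ _ (by simpa using hmem)

theorem qe_eq_some_iff {i : ℕ} {u v : List ℕ} :
    qe i u = some v ↔
      ¬HasInv i u ∧ ∃ u₁ u₂, u = u₁ ++ (i + 1) :: u₂ ∧ (i + 1) ∉ u₁ ∧ v = u₁ ++ i :: u₂ := by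
  by_cases h : HasInv i u
  · simp [qe, h]
  · rw [qe, if_neg h]
    simp only [h, not_false_iff, true_and]
    constructor
    · intro hr
      obtain ⟨u₁, u₂, hni, he, rfl⟩ := replaceFirst_eq_some_elim hr
      exact ⟨u₁, u₂, he, hni, rfl⟩
    · rintro ⟨u₁, u₂, rfl, hmem, rfl⟩
      exact replaceFirst_append_not_mem _ _ hmem

end Aux
end HypoCrystal

namespace HypoCrystal
section Aux2
open List

theorem pair_sublist_append {a b : ℕ} {A B : List ℕ} (h : [a, b] <+ A ++ B) :
    [a, b] <+ A ∨ (a ∈ A ∧ b ∈ B) ∨ [a, b] <+ B := by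
  rw [List.sublist_append_iff] at h
  obtain ⟨l₁, l₂, heq, h1, h2⟩ := h
  rcases l₁ with _ | ⟨x, l₁⟩
  · right; right; rw [show l₂ = [a, b] by simpa using heq.symm] at h2; exact h2
  rcases l₁ with _ | ⟨y, l₁⟩
  · simp only [List.cons_append, List.nil_append, List.cons.injEq] at heq
    obtain ⟨rfl, rfl⟩ := heq
    exact Or.inr (Or.inl ⟨h1.mem (by simp), h2.mem (by simp)⟩)
  · simp only [List.cons_append, List.cons.injEq] at heq
    obtain ⟨rfl, rfl, heq⟩ := heq
    have hl₁ : l₁ = [] := by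
      cases l₁ with
      | nil => rfl
      | cons z t => exact absurd heq (by simp)
    subst hl₁
    exact Or.inl (by simpa using h1)

theorem pair_sublist_cons_snd {a b c : ℕ} {t : List ℕ} (h : [a, b] <+ c :: t) : b ∈ t := by
  rw [List.sublist_cons_iff] at h
  rcases h with h | ⟨r, hr, hsub⟩
  · exact h.mem (by simp)
  · have : r = [b] := by simpa using (congrArg List.tail hr).symm
    subst this
    exact hsub.mem (by simp)

theorem pair_sublist_cons {a b c : ℕ} {t : List ℕ} (h : [a, b] <+ c :: t)
    (hne : a ≠ c) : [a, b] <+ t := by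
  rw [List.sublist_cons_iff] at h
  rcases h with h | ⟨r, hr, -⟩
  · exact h
  · exact absurd (by simpa using congrArg (List.headD · 0) hr) hne

theorem not_hasInv_left {i : ℕ} {u₁ u₂ : List ℕ} (h : ¬HasInv i (u₁ ++ i :: u₂)) :
    i + 1 ∉ u₁ := by
  intro hm
  obtain ⟨p, q, rfl⟩ := List.append_of_mem hm
  exact h ⟨p, q, u₂, by simp⟩

theorem not_hasInv_right {i : ℕ} {u₁ u₂ : List ℕ} (h : ¬HasInv i (u₁ ++ (i + 1) :: u₂)) :
    i ∉ u₂ := by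
  intro hm
  obtain ⟨p, q, rfl⟩ := List.append_of_mem hm
  exact h ⟨u₁, p, q, by simp⟩

theorem qf_qe_inverse {i : ℕ} {u v : List ℕ} (h : qf i u = some v) : qe i v = some u := by
  rw [qf_eq_some_iff] at h
  obtain ⟨hninv, u₁, u₂, rfl, hmem, rfl⟩ := h
  rw [qe_eq_some_iff]
  refine ⟨?_, u₁, u₂, rfl, not_hasInv_left hninv, rfl⟩
  intro hinv
  rw [hasInv_iff_sublist] at hinv
  rcases pair_sublist_append (show [i+1, i] <+ u₁ ++ ((i+1) :: u₂) from hinv) with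
    h' | ⟨h1', h2'⟩ | h'
  · exact hninv (hasInv_iff_sublist.2 (h'.trans (List.sublist_append_left _ _)))
  · rcases List.mem_cons.1 h2' with h2' | h2'
    · omega
    · exact hmem h2'
  · exact hmem (pair_sublist_cons_snd h')

theorem qe_qf_inverse {i : ℕ} {u v : List ℕ} (h : qe i u = some v) : qf i v = some u := by
  rw [qe_eq_some_iff] at h
  obtain ⟨hninv, u₁, u₂, rfl, hmem, rfl⟩ := h
  rw [qf_eq_some_iff]
  refine ⟨?_, u₁, u₂, rfl, not_hasInv_right hninv, rfl⟩
  intro hinv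
  rw [hasInv_iff_sublist] at hinv
  rcases pair_sublist_append (show [i+1, i] <+ u₁ ++ (i :: u₂) from hinv) with
    h' | ⟨h1', h2'⟩ | h'
  · exact hninv (hasInv_iff_sublist.2 (h'.trans (List.sublist_append_left _ _)))
  · exact hmem h1'
  · have h'' := pair_sublist_cons h' (by omega)
    exact hninv (hasInv_iff_sublist.2 (h''.trans
      ((List.sublist_cons_self (i + 1) u₂).trans (List.sublist_append_right u₁ _))))

end Aux2
end HypoCrystal

namespace HypoCrystal
section Aux3
open List

theorem headD_append_cons (g₁ g₂ : List ℕ) (x d : ℕ) :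
    (g₁ ++ x :: g₂).headD d = g₁.headD x := by cases g₁ <;> simp

theorem getLastD_append_cons (g₁ g₂ : List ℕ) (x d : ℕ) :
    (g₁ ++ x :: g₂).getLastD d = g₂.getLastD x := by
  induction g₂ using List.reverseRecOn with
  | nil => simpa using List.getLastD_concat x d g₁
  | append_singleton t y _ =>
    rw [show g₁ ++ x :: (t ++ [y]) = (g₁ ++ x :: t) ++ [y] by simp,
      List.getLastD_concat]
    rw [List.getLastD_concat]

theorem decFactors_cons_lt {a b : ℕ} {f : List ℕ} {fs : List (List ℕ)} {rest : List ℕ}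
    (h : decFactors rest = (b :: f) :: fs) (hba : b < a) :
    decFactors (a :: rest) = (a :: b :: f) :: fs := by
  rw [decFactors, h]
  simp [hba]

theorem decFactors_cons_ge {a b : ℕ} {f : List ℕ} {fs : List (List ℕ)} {rest : List ℕ}
    (h : decFactors rest = (b :: f) :: fs) (hba : ¬ b < a) :
    decFactors (a :: rest) = [a] :: (b :: f) :: fs := by
  rw [decFactors, h]
  simp [hba]

theorem decFactors_cons_nil {a : ℕ} {rest : List ℕ} (h : decFactors rest = []) :
    decFactors (a :: rest) = [[a]] := by
  rw [decFactors, h]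

theorem decFactors_flatten (u : List ℕ) : (decFactors u).flatten = u := by
  induction u with
  | nil => rfl
  | cons a rest ih =>
    rw [decFactors]
    rcases hd : decFactors rest with _ | ⟨g, fs⟩
    · rw [hd] at ih; simpa using ih.symm
    · rcases g with _ | ⟨b, f⟩
      · rw [hd] at ih; simp_all
      · rw [hd] at ih
        by_cases hba : b < a <;> simp [hba, ← ih]

theorem decFactors_facts (u : List ℕ) :
    (∀ f ∈ decFactors u, f ≠ []) ∧ (∀ f ∈ decFactors u, f.Chain' (fun p q => q < p)) ∧
      (decFactors u).Chain' (fun c d => c.getLastD 0 ≤ d.headD 0) := by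
  induction u with
  | nil => simp [decFactors]
  | cons a rest ih =>
    obtain ⟨ih1, ih2, ih3⟩ := ih
    rcases hd : decFactors rest with _ | ⟨g, fs⟩
    · rw [decFactors_cons_nil hd]; simp
    · rcases g with _ | ⟨b, f⟩
      · exact absurd rfl (ih1 [] (by rw [hd]; simp))
      · rw [hd] at ih1 ih2 ih3
        by_cases hba : b < a
        · rw [decFactors_cons_lt hd hba]
          refine ⟨?_, ?_, ?_⟩
          · intro f' hf'
            rcases List.mem_cons.1 hf' with rfl | hf'
            · simp
            · exact ih1 _ (by simp [hf'])
          · intro f' hf'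
            rcases List.mem_cons.1 hf' with rfl | hf'
            · exact (List.isChain_cons_cons).2 ⟨hba, ih2 _ (by simp)⟩
            · exact ih2 _ (by simp [hf'])
          · have h3 := ih3
            rcases fs with _ | ⟨g', fs'⟩
            · simp
            · rw [chain'_iff_isChain, List.isChain_cons_cons] at h3 ⊢
              refine ⟨?_, h3.2⟩
              rw [show (a :: b :: f).getLastD 0 = (b :: f).getLastD 0 from rfl]
              exact h3.1
        · rw [decFactors_cons_ge hd hba]
          refine ⟨?_, ?_, ?_⟩
          · intro f' hf'
            rcases List.mem_cons.1 hf' with rfl | hf'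
            · simp
            · exact ih1 _ hf'
          · intro f' hf'
            rcases List.mem_cons.1 hf' with rfl | hf'
            · simp
            · exact ih2 _ hf'
          · rw [chain'_iff_isChain, List.isChain_cons_cons]
            exact ⟨by simpa using Nat.le_of_not_lt hba, ih3⟩

end Aux3
end HypoCrystal

namespace HypoCrystal
section Aux4
open List

theorem decFactors_eq_cons (f : List ℕ) (fs : List (List ℕ)) (hne : f ≠ [])
    (hch : f.Chain' (fun p q => q < p))
    (hb : ∀ g ∈ fs.head?, f.getLastD 0 ≤ g.headD 0)
    (hfs : ∀ g ∈ fs, g ≠ [])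
    (hrec : decFactors fs.flatten = fs) :
    decFactors (f ++ fs.flatten) = f :: fs := by
  induction f with
  | nil => exact absurd rfl hne
  | cons x f ihf =>
    rcases f with _ | ⟨y, f⟩
    · rcases hfs' : fs with _ | ⟨g, gs⟩
      · subst hfs'; simpa using decFactors_cons_nil (rest := []) rfl
      · subst hfs'
        rcases g with _ | ⟨b, g'⟩
        · exact absurd rfl (hfs [] (by simp))
        · have hxb : ¬ b < x := by
            have := hb (b :: g') (by simp)
            simp at this
            omega
          simpa using decFactors_cons_ge hrec hxb
    · have hih : decFactors ((y :: f) ++ fs.flatten) = (y :: f) :: fs := by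
        refine ihf (by simp) (List.isChain_cons_cons.1 hch).2 ?_
        intro g hg
        have := hb g hg
        simpa using this
      have hxy : y < x := (List.isChain_cons_cons.1 hch).1
      simpa using decFactors_cons_lt hih hxy

theorem decFactors_eq (fs : List (List ℕ)) (h1 : ∀ f ∈ fs, f ≠ [])
    (h2 : ∀ f ∈ fs, f.Chain' (fun p q => q < p))
    (h3 : fs.Chain' (fun c d => c.getLastD 0 ≤ d.headD 0)) :
    decFactors fs.flatten = fs := by
  induction fs with
  | nil => rfl
  | cons f fs ih =>
    rw [List.flatten_cons]
    refine decFactors_eq_cons f fs (h1 f (by simp)) (h2 f (by simp)) ?_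
      (fun g hg => h1 g (by simp [hg]))
      (ih (fun g hg => h1 g (by simp [hg])) (fun g hg => h2 g (by simp [hg]))
        (List.isChain_cons.1 h3).2)
    exact (List.isChain_cons.1 h3).1

theorem flatten_split {fs : List (List ℕ)} {u₁ u₂ : List ℕ} {x : ℕ}
    (h : fs.flatten = u₁ ++ x :: u₂) :
    ∃ fs₁ g₁ g₂ fs₂, fs = fs₁ ++ (g₁ ++ x :: g₂) :: fs₂ ∧
      u₁ = fs₁.flatten ++ g₁ ∧ u₂ = g₂ ++ fs₂.flatten := by
  induction fs generalizing u₁ with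
  | nil => simp at h
  | cons f fs ih =>
    rw [List.flatten_cons] at h
    rcases List.append_eq_append_iff.1 h with ⟨a', ha1, ha2⟩ | ⟨c', hc1, hc2⟩
    · obtain ⟨fs₁, g₁, g₂, fs₂, h1, h2, h3⟩ := ih ha2
      exact ⟨f :: fs₁, g₁, g₂, fs₂, by simp [h1], by simp [ha1, h2], h3⟩
    · cases c' with
      | nil =>
        simp only [List.nil_append] at hc2
        obtain ⟨fs₁, g₁, g₂, fs₂, h1, h2, h3⟩ := ih (u₁ := []) hc2.symm
        have hg : g₁ = [] := (List.append_eq_nil_iff.1 h2.symm).2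
        have hf1 : fs₁.flatten = [] := (List.append_eq_nil_iff.1 h2.symm).1
        subst hg
        refine ⟨f :: fs₁, [], g₂, fs₂, by simp [h1], by simp [hc1, hf1], h3⟩
      | cons x' g₂ =>
        have hx : x' = x := by simpa using (congrArg (List.headD · 0) hc2).symm
        subst hx
        have hu₂ : u₂ = g₂ ++ fs.flatten := by simpa using congrArg List.tail hc2
        exact ⟨[], u₁, g₂, fs, by simp [hc1], by simp, hu₂⟩

end Aux4
end HypoCrystal

namespace HypoCrystal
section Aux5
open List

theorem headD_mem {l : List ℕ} (h : l ≠ []) (d : ℕ) : l.headD d ∈ l := by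
  cases l with
  | nil => exact absurd rfl h
  | cons a t => simp

theorem headD_eq_headD {l : List ℕ} (h : l ≠ []) (d₁ d₂ : ℕ) : l.headD d₁ = l.headD d₂ := by
  cases l with
  | nil => exact absurd rfl h
  | cons a t => simp

theorem getLastD_mem {l : List ℕ} (h : l ≠ []) (d : ℕ) : l.getLastD d ∈ l := by
  induction l using List.reverseRecOn with
  | nil => exact absurd rfl h
  | append_singleton t y _ => rw [List.getLastD_concat]; simp

theorem getLastD_eq_getLastD {l : List ℕ} (h : l ≠ []) (d₁ d₂ : ℕ) :
    l.getLastD d₁ = l.getLastD d₂ := by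
  induction l using List.reverseRecOn with
  | nil => exact absurd rfl h
  | append_singleton t y _ => rw [List.getLastD_concat, List.getLastD_concat]

theorem chain'_transfer {β : Type*} {R : β → β → Prop} {l₁ l₂ : List β} {a a' : β}
    (h : List.Chain' R (l₁ ++ a :: l₂))
    (h1 : ∀ p ∈ l₁.getLast?, R p a → R p a')
    (h2 : ∀ d ∈ l₂.head?, R a d → R a' d) :
    List.Chain' R (l₁ ++ a' :: l₂) := by
  rw [chain'_iff_isChain, List.isChain_append] at h ⊢
  obtain ⟨ha, hb, hc⟩ := h
  refine ⟨ha, ?_, ?_⟩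
  · rw [List.isChain_cons] at hb ⊢
    exact ⟨fun d hd => h2 d hd (hb.1 d hd), hb.2⟩
  · intro p hp q hq
    simp only [List.head?_cons, Option.mem_def, Option.some.injEq] at hq
    subst hq
    exact h1 p hp (hc p hp a (by simp))

theorem swap_main {u₁ u₂ : List ℕ} {x y : ℕ}
    (hA : ∀ z ∈ u₁, (z ≤ x ↔ z ≤ y)) (hB : ∀ z ∈ u₂, (x ≤ z ↔ y ≤ z)) :
    (decFactors (u₁ ++ y :: u₂)).map List.length
      = (decFactors (u₁ ++ x :: u₂)).map List.length ∧
    (IsQRWord (u₁ ++ x :: u₂) → IsQRWord (u₁ ++ y :: u₂)) := by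
  obtain ⟨hne, hch, hbd⟩ := decFactors_facts (u₁ ++ x :: u₂)
  obtain ⟨fs₁, g₁, g₂, fs₂, hfs, hu₁, hu₂⟩ :=
    flatten_split (decFactors_flatten (u₁ ++ x :: u₂))
  have hg₁u : ∀ z ∈ g₁, z ∈ u₁ := fun z hz => by
    rw [hu₁]; exact List.mem_append_right _ hz
  have hfs₁u : ∀ g ∈ fs₁, ∀ z ∈ g, z ∈ u₁ := fun g hg z hz => by
    rw [hu₁]; exact List.mem_append_left _ (List.mem_flatten.2 ⟨g, hg, hz⟩)
  have hg₂u : ∀ z ∈ g₂, z ∈ u₂ := fun z hz => by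
    rw [hu₂]; exact List.mem_append_left _ hz
  have hfs₂u : ∀ g ∈ fs₂, ∀ z ∈ g, z ∈ u₂ := fun g hg z hz => by
    rw [hu₂]; exact List.mem_append_right _ (List.mem_flatten.2 ⟨g, hg, hz⟩)
  rw [hfs] at hne hch hbd
  -- chain inside the modified factor
  have hchF : (g₁ ++ y :: g₂).Chain' (fun p q => q < p) := by
    refine chain'_transfer (hch (g₁ ++ x :: g₂) (by simp)) ?_ ?_
    · intro p hp hpx
      have hpu : p ∈ u₁ := hg₁u p (List.mem_of_mem_getLast? hp)
      have := hA p hpu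
      omega
    · intro q hq hqx
      have hqu : q ∈ u₂ := hg₂u q (List.mem_of_mem_head? hq)
      have := hB q hqu
      omega
  -- boundary chain transfers
  have hFhead : ∀ c : ℕ, (g₁ ++ c :: g₂).headD 0 = g₁.headD c := fun c =>
    headD_append_cons g₁ g₂ c 0
  have hFlast : ∀ c : ℕ, (g₁ ++ c :: g₂).getLastD 0 = g₂.getLastD c := fun c =>
    getLastD_append_cons g₁ g₂ c 0
  have hbd' : (fs₁ ++ (g₁ ++ y :: g₂) :: fs₂).Chain'
      (fun c d => c.getLastD 0 ≤ d.headD 0) := by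
    refine chain'_transfer hbd ?_ ?_
    · intro p hp hold
      rw [hFhead] at hold ⊢
      cases g₁ with
      | nil =>
        simp only [List.headD_nil] at hold ⊢
        have hpne : p ≠ [] := hne p (by
          exact List.mem_append_left _ (List.mem_of_mem_getLast? hp))
        have hpu : p.getLastD 0 ∈ u₁ :=
          hfs₁u p (List.mem_of_mem_getLast? hp) _ (getLastD_mem hpne 0)
        exact (hA _ hpu).1 hold
      | cons b t => simpa using hold
    · intro d hd hold
      rw [hFlast] at hold ⊢
      cases g₂ with
      | nil =>
        simp only [List.getLastD_nil] at hold ⊢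
        have hdne : d ≠ [] := hne d (by
          refine List.mem_append_right _ (List.mem_cons_of_mem _ ?_)
          exact List.mem_of_mem_head? hd)
        have hdu : d.headD 0 ∈ u₂ :=
          hfs₂u d (List.mem_of_mem_head? hd) _ (headD_mem hdne 0)
        exact (hB _ hdu).1 hold
      | cons b t => rwa [getLastD_eq_getLastD (List.cons_ne_nil b t) y x]
  have hnew : decFactors (u₁ ++ y :: u₂) = fs₁ ++ (g₁ ++ y :: g₂) :: fs₂ := by
    have hflat : (fs₁ ++ (g₁ ++ y :: g₂) :: fs₂).flatten = u₁ ++ y :: u₂ := by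
      rw [List.flatten_append, List.flatten_cons, hu₁, hu₂]
      simp
    rw [← hflat]
    apply decFactors_eq
    · intro f hf
      rcases List.mem_append.1 hf with hf | hf
      · exact hne f (List.mem_append_left _ hf)
      · rcases List.mem_cons.1 hf with rfl | hf
        · simp
        · exact hne f (by simp [hf])
    · intro f hf
      rcases List.mem_append.1 hf with hf | hf
      · exact hch f (List.mem_append_left _ hf)
      · rcases List.mem_cons.1 hf with rfl | hf
        · exact hchF
        · exact hch f (by simp [hf])
    · exact hbd'
  constructor
  · rw [hnew, hfs]; simp
  · intro hqr
    unfold IsQRWord at hqr ⊢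
    rw [hfs] at hqr
    rw [hnew]
    refine chain'_transfer hqr ?_ ?_
    · intro p hp hold
      rw [hFlast] at hold ⊢
      cases g₂ with
      | nil =>
        simp only [List.getLastD_nil] at hold ⊢
        have hpne : p ≠ [] := hne p (by
          exact List.mem_append_left _ (List.mem_of_mem_getLast? hp))
        have hpu : p.headD 0 ∈ u₁ :=
          hfs₁u p (List.mem_of_mem_getLast? hp) _ (headD_mem hpne 0)
        exact (hA _ hpu).1 hold
      | cons b t => rwa [getLastD_eq_getLastD (List.cons_ne_nil b t) y x]
    · intro d hd hold
      rw [hFhead] at hold ⊢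
      cases g₁ with
      | nil =>
        simp only [List.headD_nil] at hold ⊢
        have hdne : d ≠ [] := hne d (by
          refine List.mem_append_right _ (List.mem_cons_of_mem _ ?_)
          exact List.mem_of_mem_head? hd)
        have hdu : d.getLastD 0 ∈ u₂ :=
          hfs₂u d (List.mem_of_mem_head? hd) _ (getLastD_mem hdne 0)
        exact (hB _ hdu).1 hold
      | cons b t => simpa using hold

end Aux5
end HypoCrystal

namespace HypoCrystal
section Aux6
open List

theorem qf_preserve {n i : ℕ} {u v : List ℕ} (hi2 : i < n)
    (h : qf i u = some v) (hw : IsWord n u) (hq : IsQRWord u) :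
    IsWord n v ∧ IsQRWord v ∧ shape v = shape u := by
  rw [qf_eq_some_iff] at h
  obtain ⟨hninv, u₁, u₂, rfl, hmem, rfl⟩ := h
  have hA : ∀ z ∈ u₁, (z ≤ i ↔ z ≤ i + 1) := by
    intro z hz
    have : z ≠ i + 1 := fun hh => not_hasInv_left hninv (hh ▸ hz)
    omega
  have hB : ∀ z ∈ u₂, (i ≤ z ↔ i + 1 ≤ z) := by
    intro z hz
    have : z ≠ i := fun hh => hmem (hh ▸ hz)
    omega
  obtain ⟨hlen, hqr⟩ := swap_main hA hB
  refine ⟨?_, hqr hq, ?_⟩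
  · intro z hz
    rcases List.mem_append.1 hz with hz | hz
    · exact hw z (List.mem_append_left _ hz)
    · rcases List.mem_cons.1 hz with rfl | hz
      · omega
      · exact hw z (by simp [hz])
  · unfold shape
    rw [hlen]

theorem qe_preserve {n i : ℕ} {u v : List ℕ} (hi1 : 1 ≤ i)
    (h : qe i u = some v) (hw : IsWord n u) (hq : IsQRWord u) :
    IsWord n v ∧ IsQRWord v ∧ shape v = shape u := by
  rw [qe_eq_some_iff] at h
  obtain ⟨hninv, u₁, u₂, rfl, hmem, rfl⟩ := h
  have hA : ∀ z ∈ u₁, (z ≤ i + 1 ↔ z ≤ i) := by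
    intro z hz
    have : z ≠ i + 1 := fun hh => hmem (hh ▸ hz)
    omega
  have hB : ∀ z ∈ u₂, (i + 1 ≤ z ↔ i ≤ z) := by
    intro z hz
    have : z ≠ i := fun hh => not_hasInv_right hninv (hh ▸ hz)
    omega
  obtain ⟨hlen, hqr⟩ := swap_main hA hB
  refine ⟨?_, hqr hq, ?_⟩
  · intro z hz
    rcases List.mem_append.1 hz with hz | hz
    · exact hw z (List.mem_append_left _ hz)
    · rcases List.mem_cons.1 hz with hz' | hz
      · have hn : i + 1 ≤ n := (hw (i + 1) (by simp)).2
        omega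
      · exact hw z (by simp [hz])
  · unfold shape
    rw [hlen]

theorem qe_sum {i : ℕ} {u v : List ℕ} (h : qe i u = some v) : v.sum + 1 = u.sum := by
  rw [qe_eq_some_iff] at h
  obtain ⟨-, u₁, u₂, rfl, -, rfl⟩ := h
  simp [List.sum_append]
  omega

end Aux6

section Aux7
open List

theorem rowLengths_single (d : ℕ) : rowLengths [d] = List.replicate d 1 := rfl

theorem rowLengths_cons_cons (d e : ℕ) (rest : List ℕ) :
    rowLengths (d :: e :: rest) = List.replicate (d - 1) 1 ++
      (match rowLengths (e :: rest) with | [] => [1] | r :: rs => (r + 1) :: rs) := rfl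

theorem rowLengths_ne_nil {hs : List ℕ} (hpos : ∀ h ∈ hs, 1 ≤ h) (hne : hs ≠ []) :
    rowLengths hs ≠ [] := by
  rcases hs with _ | ⟨d, hs⟩
  · exact absurd rfl hne
  rcases hs with _ | ⟨e, rest⟩
  · have hd : 1 ≤ d := hpos d (by simp)
    rw [rowLengths_single]
    intro hh
    have := congrArg List.length hh
    simp at this
    omega
  · rw [rowLengths_cons_cons]
    rcases h : rowLengths (e :: rest) with _ | ⟨r, rs⟩ <;> simp

theorem rowLengths_replicate_one {s : ℕ} (hs : 1 ≤ s) :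
    rowLengths (List.replicate s 1) = [s] := by
  induction s with
  | zero => omega
  | succ s ih =>
    rcases s with _ | s'
    · rfl
    · have h2 : List.replicate (s' + 1 + 1) 1 = 1 :: 1 :: List.replicate s' 1 := by
        simp [List.replicate_succ]
      have h1 : (1 : ℕ) :: List.replicate s' 1 = List.replicate (s' + 1) 1 := by
        simp [List.replicate_succ]
      rw [h2, rowLengths_cons_cons, h1, ih (by omega)]
      simp

theorem rowLengths_step {s d : ℕ} {ds : List ℕ} (hd : 1 ≤ d) :
    rowLengths (List.replicate s 1 ++ (d + 1) :: ds) = (s + 1) :: rowLengths (d :: ds) := by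
  induction s with
  | zero =>
    simp only [List.replicate, List.nil_append]
    rcases ds with _ | ⟨e, rest⟩
    · rw [rowLengths_single, rowLengths_single]
      rcases d with _ | d'
      · omega
      · simp [List.replicate_succ]
    · rw [rowLengths_cons_cons, rowLengths_cons_cons]
      simp only [Nat.add_sub_cancel]
      rcases d with _ | d'
      · omega
      · rw [show d' + 1 - 1 = d' from rfl,
          show List.replicate (d' + 1) 1 = 1 :: List.replicate d' 1 by simp [List.replicate_succ]]
        simp
  | succ s ih =>
    rw [List.replicate_succ, List.cons_append]
    have hex : ∃ e rest, List.replicate s 1 ++ (d + 1) :: ds = e :: rest := by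
      rcases s with _ | s'
      · exact ⟨d + 1, ds, by simp⟩
      · exact ⟨1, List.replicate s' 1 ++ (d + 1) :: ds, by simp [List.replicate_succ]⟩
    obtain ⟨e, rest, heq⟩ := hex
    rw [heq, rowLengths_cons_cons, ← heq, ih]
    simp

end Aux7
end HypoCrystal

namespace HypoCrystal
section Aux8
open List

theorem getLast?_eqD {l : List ℕ} {p : ℕ} (h : l.getLast? = some p) : l.getLastD 0 = p := by
  rw [List.getLastD_eq_getLast?, h]; rfl

theorem head?_eqD {l : List ℕ} {p : ℕ} (h : l.head? = some p) : l.headD 0 = p := by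
  rw [List.headD_eq_head?, h]; rfl

theorem chain'_replicate_of_rel {β : Type*} {R : β → β → Prop} {x : β} (hx : R x x) (k : ℕ) :
    List.Chain' R (List.replicate k x) := by
  induction k with
  | zero => simp
  | succ k ih =>
    rw [List.replicate_succ, chain'_iff_isChain, List.isChain_cons]
    refine ⟨fun y hy => ?_, ih⟩
    rw [List.eq_of_mem_replicate (List.mem_of_mem_head? hy)]
    exact hx

theorem flatten_replicate_singleton (k j : ℕ) :
    (List.replicate k [j]).flatten = List.replicate k j := by
  induction k with
  | zero => rfl
  | succ k ih => simp [List.replicate_succ, ih]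

theorem hwCols_nil (j : ℕ) : hwCols [] j = [] := rfl

theorem hwCols_single (a j : ℕ) : hwCols [a] j = List.replicate a [j] := rfl

theorem hwCols_eq (a b : ℕ) (rest : List ℕ) (j : ℕ) :
    hwCols (a :: b :: rest) j = List.replicate (a - 1) [j] ++
      (match hwCols (b :: rest) (j + 1) with
       | [] => [[j]]
       | c :: cs => (c ++ [j]) :: cs) := rfl

theorem hwCols_cons_cons {a b : ℕ} {rest : List ℕ} {j : ℕ} {c : List ℕ} {cs : List (List ℕ)}
    (h : hwCols (b :: rest) (j + 1) = c :: cs) :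
    hwCols (a :: b :: rest) j = List.replicate (a - 1) [j] ++ (c ++ [j]) :: cs := by
  rw [hwCols_eq, h]

theorem hwCols_ne_nil {α : List ℕ} (j : ℕ) (hpos : ∀ x ∈ α, 0 < x) (hne : α ≠ []) :
    hwCols α j ≠ [] := by
  rcases α with _ | ⟨a, β⟩
  · exact absurd rfl hne
  rcases β with _ | ⟨b, rest⟩
  · have ha : 0 < a := hpos a (by simp)
    rw [hwCols_single]
    intro hh
    have := congrArg List.length hh
    simp at this
    omega
  · rcases h' : hwCols (b :: rest) (j + 1) with _ | ⟨c, cs⟩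
    · rw [hwCols_eq, h']; simp
    · rw [hwCols_cons_cons h']; simp

theorem hwCols_mem_ne_nil {α : List ℕ} (j : ℕ) : ∀ f ∈ hwCols α j, f ≠ [] := by
  induction α generalizing j with
  | nil => simp [hwCols_nil]
  | cons a β ih =>
    rcases β with _ | ⟨b, rest⟩
    · intro f hf
      rw [hwCols_single] at hf
      rw [List.eq_of_mem_replicate hf]
      simp
    · intro f hf
      rcases h' : hwCols (b :: rest) (j + 1) with _ | ⟨c, cs⟩
      · rw [hwCols_eq, h'] at hf
        rcases List.mem_append.1 hf with hf | hf
        · rw [List.eq_of_mem_replicate hf]; simp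
        · simp at hf; rw [hf]; simp
      · rw [hwCols_cons_cons h'] at hf
        rcases List.mem_append.1 hf with hf | hf
        · rw [List.eq_of_mem_replicate hf]; simp
        · rcases List.mem_cons.1 hf with rfl | hf
          · simp
          · exact ih (j + 1) f (h' ▸ List.mem_cons_of_mem _ hf)

theorem hwCols_head_getLast {α : List ℕ} {j : ℕ} {c : List ℕ} {cs : List (List ℕ)}
    (h : hwCols α j = c :: cs) : c.getLastD 0 = j := by
  rcases α with _ | ⟨a, β⟩
  · simp [hwCols_nil] at h
  rcases β with _ | ⟨b, rest⟩
  · rw [hwCols_single] at h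
    have : c ∈ List.replicate a [j] := h ▸ List.mem_cons_self (a := c) (l := cs)
    rw [List.eq_of_mem_replicate this]
    rfl
  · rcases h' : hwCols (b :: rest) (j + 1) with _ | ⟨c', cs'⟩
    · rw [hwCols_eq, h'] at h
      have : c ∈ List.replicate (a - 1) [j] ++ [[j]] := h ▸ List.mem_cons_self (a := c) (l := cs)
      rcases List.mem_append.1 this with hm | hm
      · rw [List.eq_of_mem_replicate hm]; rfl
      · simp at hm; rw [hm]; rfl
    · rw [hwCols_cons_cons h'] at h
      have : c ∈ List.replicate (a - 1) [j] ++ (c' ++ [j]) :: cs' := h ▸ List.mem_cons_self (a := c) (l := cs)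
      rcases List.mem_append.1 this with hm | hm
      · rw [List.eq_of_mem_replicate hm]; rfl
      · rcases Nat.eq_zero_or_pos (a - 1) with hz | hp
        · rw [hz] at h
          simp only [List.replicate, List.nil_append, List.cons.injEq] at h
          rw [← h.1, List.getLastD_concat]
        · obtain ⟨k, hk⟩ : ∃ k, a - 1 = k + 1 := ⟨a - 2, by omega⟩
          rw [hk, List.replicate_succ, List.cons_append, List.cons.injEq] at h
          rw [← h.1]; rfl

theorem hwCols_letters {α : List ℕ} (j : ℕ) (hpos : ∀ x ∈ α, 0 < x) :
    ∀ z ∈ (hwCols α j).flatten, j ≤ z ∧ z < j + α.length := by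
  induction α generalizing j with
  | nil => simp [hwCols_nil]
  | cons a β ih =>
    rcases β with _ | ⟨b, rest⟩
    · intro z hz
      rw [hwCols_single, flatten_replicate_singleton] at hz
      rw [List.eq_of_mem_replicate hz]
      simp
    · obtain ⟨c, cs, h'⟩ := List.exists_cons_of_ne_nil
        (hwCols_ne_nil (j + 1) (fun x hx => hpos x (List.mem_cons_of_mem _ hx)) (by simp))
      intro z hz
      rw [hwCols_cons_cons h', List.flatten_append, flatten_replicate_singleton,
        List.flatten_cons] at hz
      have hsub : z ∈ (c :: cs).flatten → j ≤ z ∧ z < j + (a :: b :: rest).length := by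
        intro hm
        have := ih (j + 1) (fun x hx => hpos x (List.mem_cons_of_mem _ hx)) z (h' ▸ hm)
        simp only [List.length_cons] at this ⊢
        omega
      rcases List.mem_append.1 hz with hz | hz
      · have := List.eq_of_mem_replicate hz
        simp [this]
      · rcases List.mem_append.1 hz with hz | hz
        · rcases List.mem_append.1 hz with hz | hz
          · exact hsub (by rw [List.flatten_cons]; exact List.mem_append_left _ hz)
          · simp at hz
            simp [hz]
        · exact hsub (by rw [List.flatten_cons]; exact List.mem_append_right _ hz)

end Aux8
end HypoCrystal

namespace HypoCrystal
section Aux9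
open List

theorem hwCols_chain_dec {α : List ℕ} (j : ℕ) (hpos : ∀ x ∈ α, 0 < x) :
    ∀ f ∈ hwCols α j, f.Chain' (fun p q => q < p) := by
  induction α generalizing j with
  | nil => simp [hwCols_nil]
  | cons a β ih =>
    rcases β with _ | ⟨b, rest⟩
    · intro f hf
      rw [hwCols_single] at hf
      rw [List.eq_of_mem_replicate hf]
      simp
    · have hpos' : ∀ x ∈ b :: rest, 0 < x := fun x hx => hpos x (List.mem_cons_of_mem _ hx)
      obtain ⟨c, cs, h'⟩ := List.exists_cons_of_ne_nil (hwCols_ne_nil (j + 1) hpos' (by simp))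
      intro f hf
      rw [hwCols_cons_cons h'] at hf
      rcases List.mem_append.1 hf with hf | hf
      · rw [List.eq_of_mem_replicate hf]; simp
      · rcases List.mem_cons.1 hf with rfl | hf
        · rw [chain'_iff_isChain, List.isChain_append]
          refine ⟨ih (j + 1) hpos' c (by rw [h']; simp), by simp, ?_⟩
          intro p hp q hq
          simp only [List.head?_cons, Option.mem_def, Option.some.injEq] at hq
          subst hq
          have hp' : c.getLastD 0 = p := by
            rw [List.getLastD_eq_getLast?, Option.mem_def.1 hp]; rfl
          have := hwCols_head_getLast h'
          omega
        · exact ih (j + 1) hpos' f (by rw [h']; exact List.mem_cons_of_mem _ hf)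

end Aux9
end HypoCrystal

namespace HypoCrystal
section Aux10
open List

theorem headD_append_of_ne_nil {c : List ℕ} (h : c ≠ []) (l : List ℕ) (d : ℕ) :
    (c ++ l).headD d = c.headD d := by
  cases c with
  | nil => exact absurd rfl h
  | cons a t => simp

theorem hwCols_bnd {α : List ℕ} (j : ℕ) (hpos : ∀ x ∈ α, 0 < x) :
    (hwCols α j).Chain' (fun c d => c.getLastD 0 ≤ d.headD 0) := by
  induction α generalizing j with
  | nil => simp [hwCols_nil]
  | cons a β ih =>
    rcases β with _ | ⟨b, rest⟩
    · rw [hwCols_single]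
      exact chain'_replicate_of_rel (by simp) a
    · have hpos' : ∀ x ∈ b :: rest, 0 < x := fun x hx => hpos x (List.mem_cons_of_mem _ hx)
      obtain ⟨c, cs, h'⟩ := List.exists_cons_of_ne_nil (hwCols_ne_nil (j + 1) hpos' (by simp))
      rw [hwCols_cons_cons h', chain'_iff_isChain, List.isChain_append]
      have hcne : c ≠ [] := hwCols_mem_ne_nil (j + 1) c (by rw [h']; simp)
      refine ⟨chain'_replicate_of_rel (by simp) _, ?_, ?_⟩
      · rw [List.isChain_cons]
        constructor
        · intro d hd
          have hdm : d ∈ cs := List.mem_of_mem_head? hd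
          have hdne : d ≠ [] := hwCols_mem_ne_nil (j + 1) d
            (by rw [h']; exact List.mem_cons_of_mem _ hdm)
          have hdh : d.headD 0 ∈ (hwCols (b :: rest) (j + 1)).flatten := by
            rw [h', List.flatten_cons]
            exact List.mem_append_right _ (List.mem_flatten.2 ⟨d, hdm, headD_mem hdne 0⟩)
          have := (hwCols_letters (j + 1) hpos' _ hdh).1
          rw [List.getLastD_concat]
          omega
        · have := ih (j + 1) hpos'
          rw [h'] at this
          exact this.tail
      · intro p hp q hq
        simp only [List.head?_cons, Option.mem_def, Option.some.injEq] at hq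
        subst hq
        have hpj : p = [j] := List.eq_of_mem_replicate (List.mem_of_mem_getLast? hp)
        subst hpj
        rw [headD_append_of_ne_nil hcne]
        have hch : c.headD 0 ∈ (hwCols (b :: rest) (j + 1)).flatten := by
          rw [h', List.flatten_cons]
          exact List.mem_append_left _ (headD_mem hcne 0)
        have := (hwCols_letters (j + 1) hpos' _ hch).1
        simp only [List.getLastD_cons, List.getLastD_nil]
        omega

theorem hwCols_qr {α : List ℕ} (j : ℕ) (hpos : ∀ x ∈ α, 0 < x) :
    (hwCols α j).Chain' (fun c d => c.headD 0 ≤ d.getLastD 0) := by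
  induction α generalizing j with
  | nil => simp [hwCols_nil]
  | cons a β ih =>
    rcases β with _ | ⟨b, rest⟩
    · rw [hwCols_single]
      exact chain'_replicate_of_rel (by simp) a
    · have hpos' : ∀ x ∈ b :: rest, 0 < x := fun x hx => hpos x (List.mem_cons_of_mem _ hx)
      obtain ⟨c, cs, h'⟩ := List.exists_cons_of_ne_nil (hwCols_ne_nil (j + 1) hpos' (by simp))
      rw [hwCols_cons_cons h', chain'_iff_isChain, List.isChain_append]
      have hcne : c ≠ [] := hwCols_mem_ne_nil (j + 1) c (by rw [h']; simp)
      have hih := ih (j + 1) hpos'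
      rw [h'] at hih
      refine ⟨chain'_replicate_of_rel (by simp) _, ?_, ?_⟩
      · rw [List.isChain_cons]
        constructor
        · intro d hd
          rw [headD_append_of_ne_nil hcne]
          exact (List.isChain_cons.1 hih).1 d hd
        · exact hih.tail
      · intro p hp q hq
        simp only [List.head?_cons, Option.mem_def, Option.some.injEq] at hq
        subst hq
        have hpj : p = [j] := List.eq_of_mem_replicate (List.mem_of_mem_getLast? hp)
        subst hpj
        rw [List.getLastD_concat]
        simp

theorem hwCols_rowLengths {α : List ℕ} (j : ℕ) (hpos : ∀ x ∈ α, 0 < x) :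
    rowLengths ((hwCols α j).map List.length) = α := by
  induction α generalizing j with
  | nil => rfl
  | cons a β ih =>
    rcases β with _ | ⟨b, rest⟩
    · rw [hwCols_single]
      have ha : 0 < a := hpos a (by simp)
      rw [show (List.replicate a [j]).map List.length = List.replicate a 1 by simp]
      exact rowLengths_replicate_one ha
    · have hpos' : ∀ x ∈ b :: rest, 0 < x := fun x hx => hpos x (List.mem_cons_of_mem _ hx)
      obtain ⟨c, cs, h'⟩ := List.exists_cons_of_ne_nil (hwCols_ne_nil (j + 1) hpos' (by simp))
      have hcne : c ≠ [] := hwCols_mem_ne_nil (j + 1) c (by rw [h']; simp)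
      have hclen : 1 ≤ c.length := by
        rcases c with _ | ⟨z, t⟩
        · exact absurd rfl hcne
        · simp
      rw [hwCols_cons_cons h']
      rw [List.map_append, List.map_cons]
      rw [show (List.replicate (a - 1) [j]).map List.length = List.replicate (a - 1) 1 by simp]
      rw [show (c ++ [j]).length = c.length + 1 by simp]
      rw [rowLengths_step hclen]
      have := ih (j + 1) hpos'
      rw [h', List.map_cons] at this
      rw [this]
      have ha : 0 < a := hpos a (by simp)
      congr 1
      omega

theorem hwCols_pair {α : List ℕ} (j : ℕ) (hpos : ∀ x ∈ α, 0 < x) :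
    ∀ m, j < m → m < j + α.length → [m, m - 1] <+ (hwCols α j).flatten := by
  induction α generalizing j with
  | nil => intro m h1 h2; simp at h2; omega
  | cons a β ih =>
    rcases β with _ | ⟨b, rest⟩
    · intro m h1 h2; simp at h2; omega
    · have hpos' : ∀ x ∈ b :: rest, 0 < x := fun x hx => hpos x (List.mem_cons_of_mem _ hx)
      obtain ⟨c, cs, h'⟩ := List.exists_cons_of_ne_nil (hwCols_ne_nil (j + 1) hpos' (by simp))
      have hcne : c ≠ [] := hwCols_mem_ne_nil (j + 1) c (by rw [h']; simp)
      intro m h1 h2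
      rw [hwCols_cons_cons h', List.flatten_append, List.flatten_cons]
      rcases Nat.lt_or_ge (j + 1) m with hm | hm
      · -- use IH
        have hsub : [m, m - 1] <+ (hwCols (b :: rest) (j + 1)).flatten := by
          refine ih (j + 1) hpos' m hm ?_
          simp only [List.length_cons] at h2 ⊢
          omega
        rw [h', List.flatten_cons] at hsub
        refine List.Sublist.trans hsub ?_ |>.trans (List.sublist_append_right _ _)
        rw [show c ++ [j] ++ cs.flatten = c ++ ([j] ++ cs.flatten) by simp]
        exact (List.Sublist.refl c).append
          ((List.sublist_cons_self j cs.flatten).trans (List.Sublist.refl _))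
      · have hmj : m = j + 1 := by omega
        subst hmj
        have hlast : c.getLastD 0 = j + 1 := hwCols_head_getLast h'
        have hc : c.dropLast ++ [j + 1] = c := by
          have h0 := List.dropLast_append_getLast hcne
          have : c.getLast hcne = c.getLastD 0 := by
            have := List.getLast?_eq_getLast hcne
            rw [List.getLastD_eq_getLast?, this]
            rfl
          rw [this, hlast] at h0
          exact h0
        have : [j + 1, j + 1 - 1] <+ c ++ [j] := by
          rw [← hc, show (c.dropLast ++ [j + 1]) ++ [j] = c.dropLast ++ [j + 1, j] by simp]
          have : [j + 1, j + 1 - 1] = [j + 1, j] := by simp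
          rw [this]
          exact List.sublist_append_right _ _
        refine (this.trans (List.sublist_append_left _ cs.flatten)).trans
          (List.sublist_append_right _ _)

end Aux10
end HypoCrystal

namespace HypoCrystal
section Aux11
open List

theorem decFactors_hwQR {α : List ℕ} (hpos : ∀ x ∈ α, 0 < x) :
    decFactors (hwQR α) = hwCols α 1 :=
  decFactors_eq _ (hwCols_mem_ne_nil 1) (hwCols_chain_dec 1 hpos) (hwCols_bnd 1 hpos)

theorem shape_hwQR {α : List ℕ} (hpos : ∀ x ∈ α, 0 < x) : shape (hwQR α) = α := by
  unfold shape
  rw [decFactors_hwQR hpos]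
  exact hwCols_rowLengths 1 hpos

theorem isQR_hwQR {α : List ℕ} (hpos : ∀ x ∈ α, 0 < x) : IsQRWord (hwQR α) := by
  unfold IsQRWord
  rw [decFactors_hwQR hpos]
  exact hwCols_qr 1 hpos

theorem isWord_hwQR {n : ℕ} {α : List ℕ} (hpos : ∀ x ∈ α, 0 < x) (hlen : α.length ≤ n) :
    IsWord n (hwQR α) := by
  intro z hz
  have := hwCols_letters 1 hpos z hz
  omega

theorem hw_hwQR {n : ℕ} {α : List ℕ} (hpos : ∀ x ∈ α, 0 < x) (hlen : α.length ≤ n) :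
    HighestWeight n (hwQR α) := by
  intro i hi1 hi2
  rw [qe_eq_none_iff]
  by_cases hm : (i + 1) ∈ hwQR α
  · left
    have hb := hwCols_letters 1 hpos (i + 1) hm
    rw [hasInv_iff_sublist]
    have := hwCols_pair 1 hpos (i + 1) (by omega) (by omega)
    simpa [hwQR] using this
  · right; exact hm

theorem dec_le_head {f : List ℕ} (hch : f.Chain' (fun p q => q < p)) :
    ∀ a ∈ f, a ≤ f.headD 0 := by
  induction f with
  | nil => simp
  | cons x t ih =>
    intro a ha
    rcases List.mem_cons.1 ha with rfl | ha
    · simp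
    · have htne : t ≠ [] := List.ne_nil_of_mem ha
      have h1 : a ≤ t.headD 0 := ih (List.isChain_cons.1 hch).2 a ha
      have h2 : t.headD 0 < x := (List.isChain_cons.1 hch).1 _ (by
        rw [List.headD_eq_head?]
        rcases List.exists_cons_of_ne_nil htne with ⟨z, zs, rfl⟩
        simp)
      simp only [List.headD_cons]
      omega

theorem getLastD_cons_of_ne_nil {x : ℕ} {t : List ℕ} (h : t ≠ []) :
    (x :: t).getLastD 0 = t.getLastD 0 := by
  rw [List.getLastD_cons]
  exact getLastD_eq_getLastD h x 0

theorem dec_getLast_le {f : List ℕ} (hch : f.Chain' (fun p q => q < p)) :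
    ∀ a ∈ f, f.getLastD 0 ≤ a := by
  induction f with
  | nil => simp
  | cons x t ih =>
    intro a ha
    rcases t.eq_nil_or_concat with rfl | ⟨t', y, rfl⟩
    · simp at ha
      simp [ha]
    · simp only [List.concat_eq_append] at ih hch ha ⊢
      have htne : t' ++ [y] ≠ [] := by simp
      rw [getLastD_cons_of_ne_nil htne]
      rcases List.mem_cons.1 ha with rfl | ha
      · have hmem : (t' ++ [y]).getLastD 0 ∈ t' ++ [y] := getLastD_mem htne 0
        have h1 : (t' ++ [y]).getLastD 0 ≤ (t' ++ [y]).headD 0 :=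
          dec_le_head (List.isChain_cons.1 hch).2 _ hmem
        have h2 : (t' ++ [y]).headD 0 < a := (List.isChain_cons.1 hch).1 _ (by
          rw [List.headD_eq_head?]
          rcases List.exists_cons_of_ne_nil htne with ⟨z, zs, hz⟩
          rw [hz]; simp)
        omega
      · exact ih (List.isChain_cons.1 hch).2 a ha

theorem dec_dropLast_gt {f : List ℕ} (hch : f.Chain' (fun p q => q < p)) :
    ∀ a ∈ f.dropLast, f.getLastD 0 < a := by
  induction f with
  | nil => simp
  | cons x t ih =>
    intro a ha
    rcases t.eq_nil_or_concat with rfl | ⟨t', y, rfl⟩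
    · simp at ha
    · simp only [List.concat_eq_append] at ih hch ha ⊢
      have htne : t' ++ [y] ≠ [] := by simp
      rw [getLastD_cons_of_ne_nil htne]
      rw [show (x :: (t' ++ [y])).dropLast = x :: (t' ++ [y]).dropLast by
        rcases t' with _ | ⟨z, zs⟩ <;> simp] at ha
      rcases List.mem_cons.1 ha with rfl | ha
      · have hmem : (t' ++ [y]).getLastD 0 ∈ t' ++ [y] := getLastD_mem htne 0
        have h1 : (t' ++ [y]).getLastD 0 ≤ (t' ++ [y]).headD 0 :=
          dec_le_head (List.isChain_cons.1 hch).2 _ hmem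
        have h2 : (t' ++ [y]).headD 0 < a := (List.isChain_cons.1 hch).1 _ (by
          rw [List.headD_eq_head?]
          rcases List.exists_cons_of_ne_nil htne with ⟨z, zs, hz⟩
          rw [hz]; simp)
        omega
      · exact ih (List.isChain_cons.1 hch).2 a ha

theorem dec_all_eq {f : List ℕ} {j : ℕ} (hch : f.Chain' (fun p q => q < p)) (hne : f ≠ [])
    (hall : ∀ a ∈ f, a = j) : f = [j] := by
  rcases f with _ | ⟨x, t⟩
  · exact absurd rfl hne
  rcases t with _ | ⟨y, t⟩
  · rw [hall x (by simp)]
  · have hx : x = j := hall x (by simp)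
    have hy : y = j := hall y (by simp)
    have := (List.isChain_cons_cons.1 hch).1
    omega

theorem dropLast_append_getLastD {f : List ℕ} (hne : f ≠ []) :
    f.dropLast ++ [f.getLastD 0] = f := by
  have h0 := List.dropLast_append_getLast hne
  have h1 : f.getLast hne = f.getLastD 0 := by
    have h2 := List.getLast?_eq_getLast hne
    rw [List.getLastD_eq_getLast?, h2]
    rfl
  rw [← h1]
  exact h0

theorem form_lemma {j : ℕ} : ∀ (fs : List (List ℕ)),
    (∀ f ∈ fs, f ≠ []) → (∀ f ∈ fs, f.Chain' (fun p q => q < p)) →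
    fs.Chain' (fun c d => c.headD 0 ≤ d.getLastD 0) →
    (∀ z ∈ fs.flatten, j ≤ z) → j ∈ fs.flatten →
    ∃ s mid tail, fs = List.replicate s [j] ++ mid ++ tail ∧ j ∉ tail.flatten ∧
      (mid = [] ∨ ∃ c', mid = [c' ++ [j]] ∧ c' ≠ [] ∧ j ∉ c') := by
  intro fs
  induction fs with
  | nil => intro _ _ _ _ hj; simp at hj
  | cons f fsr ih =>
    intro hne hch hqr hletters hj
    have hfne : f ≠ [] := hne f (by simp)
    have hfch := hch f (by simp)
    by_cases hjf : j ∈ fsr.flatten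
    · obtain ⟨s, mid, tail, h1, h2, h3⟩ := ih
        (fun g hg => hne g (List.mem_cons_of_mem _ hg))
        (fun g hg => hch g (List.mem_cons_of_mem _ hg))
        ((List.isChain_cons.1 hqr).2)
        (fun z hz => hletters z (by rw [List.flatten_cons]; exact List.mem_append_right _ hz))
        hjf
      have hfsr_ne : fsr ≠ [] := by rintro rfl; simp at hjf
      obtain ⟨g, gs, hg⟩ := List.exists_cons_of_ne_nil hfsr_ne
      have hglast : g.getLastD 0 = j := by
        rcases s with _ | s'
        · simp only [List.replicate, List.nil_append] at h1
          rcases h3 with rfl | ⟨c', rfl, hc'ne, hc'j⟩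
          · rw [List.nil_append] at h1
            rw [h1] at hjf
            exact absurd hjf h2
          · rw [h1] at hg
            simp only [List.cons_append, List.cons.injEq] at hg
            rw [← hg.1, List.getLastD_concat]
        · rw [List.replicate_succ] at h1
          rw [h1] at hg
          simp only [List.cons_append, List.cons.injEq] at hg
          rw [← hg.1]
          rfl
      have hlink : f.headD 0 ≤ g.getLastD 0 := by
        have := (List.isChain_cons.1 hqr).1 g (by rw [hg]; simp)
        exact this
      rw [hglast] at hlink
      have hall : ∀ a ∈ f, a = j := by
        intro a ha
        have h1' : a ≤ f.headD 0 := dec_le_head hfch a ha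
        have h2' : j ≤ a := hletters a (by
          rw [List.flatten_cons]; exact List.mem_append_left _ ha)
        omega
      have hf : f = [j] := dec_all_eq hfch hfne hall
      refine ⟨s + 1, mid, tail, ?_, h2, h3⟩
      rw [hf, h1, List.replicate_succ]
      simp
    · have hjf' : j ∈ f := by
        rw [List.flatten_cons] at hj
        rcases List.mem_append.1 hj with h | h
        · exact h
        · exact absurd h hjf
      have hlast : f.getLastD 0 = j := by
        have h1' := dec_getLast_le hfch j hjf'
        have h2' : j ≤ f.getLastD 0 := hletters _ (by
          rw [List.flatten_cons]
          exact List.mem_append_left _ (getLastD_mem hfne 0))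
        omega
      have hdrop : j ∉ f.dropLast := by
        intro hm
        have := dec_dropLast_gt hfch j hm
        omega
      have hfd : f.dropLast ++ [j] = f := by
        rw [← hlast]
        exact dropLast_append_getLastD hfne
      rcases eq_or_ne f.dropLast [] with hdl | hdl
      · have hf : f = [j] := by rw [← hfd, hdl]; rfl
        exact ⟨1, [], fsr, by simp [hf], hjf, Or.inl rfl⟩
      · exact ⟨0, [f.dropLast ++ [j]], fsr, by simp [hfd], hjf,
          Or.inr ⟨f.dropLast, rfl, hdl, hdrop⟩⟩

end Aux11
end HypoCrystal

namespace HypoCrystal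
section Aux12
open List

theorem sublist_removal {a b x : ℕ} {P Q R : List ℕ} (h : [a, b] <+ P ++ (Q ++ x :: R))
    (haP : a ∉ P) (hbP : b ∉ P) (hax : a ≠ x) (hbx : b ≠ x) : [a, b] <+ Q ++ R := by
  rcases pair_sublist_append h with h' | ⟨h1, h2⟩ | h'
  · exact absurd (h'.mem (by simp)) haP
  · exact absurd h1 haP
  · rcases pair_sublist_append h' with h'' | ⟨h1, h2⟩ | h''
    · exact h''.trans (List.sublist_append_left _ _)
    · have hbR : b ∈ R := by
        rcases List.mem_cons.1 h2 with h3 | h3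
        · exact absurd h3 hbx
        · exact h3
      exact (List.singleton_sublist.2 h1).append (List.singleton_sublist.2 hbR)
    · exact (pair_sublist_cons h'' hax).trans (List.sublist_append_right _ _)

theorem min_exists {w : List ℕ} (hne : w ≠ []) : ∃ m, m ∈ w ∧ ∀ a ∈ w, m ≤ a := by
  obtain ⟨m, hm⟩ : ∃ m, w.min? = some m := by
    rcases w with _ | ⟨a, t⟩
    · exact absurd rfl hne
    · exact ⟨_, List.min?_cons⟩
  rw [List.min?_eq_some_iff'] at hm
  exact ⟨m, hm⟩

theorem hw_main {n : ℕ} : ∀ (N : ℕ) (w : List ℕ) (j : ℕ), w.length ≤ N → IsWord n w →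
    (∀ a ∈ w, j ≤ a) → IsQRWord w → (∀ i, j ≤ i → i < n → qe i w = none) →
    decFactors w = hwCols (shape w) j := by
  intro N
  induction N with
  | zero =>
    intro w j hlen _ _ _ _
    have hw : w = [] := List.eq_nil_of_length_eq_zero (by omega)
    subst hw
    rfl
  | succ N ih =>
    intro w j hlen hword hge hqr hhw
    rcases eq_or_ne w [] with rfl | hwne
    · rfl
    have hjw : j ∈ w := by
      by_contra hjw
      obtain ⟨m, hmmem, hmle⟩ := min_exists hwne
      have hmj : j < m := lt_of_le_of_ne (hge m hmmem) (fun h => hjw (h ▸ hmmem))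
      have hmn : m ≤ n := (hword m hmmem).2
      have hq := hhw (m - 1) (by omega) (by omega)
      rw [qe_eq_none_iff] at hq
      rcases hq with hinv | hnm
      · have h5 := hmle _ hinv.mem_right
        omega
      · have h5 : m - 1 + 1 = m := by omega
        rw [h5] at hnm
        exact hnm hmmem
    obtain ⟨hne, hch, hbd⟩ := decFactors_facts w
    have hflat := decFactors_flatten w
    have hqrc : (decFactors w).Chain' (fun c d => c.headD 0 ≤ d.getLastD 0) := hqr
    obtain ⟨s, mid, tail, h1, h2, h3⟩ := form_lemma (decFactors w) hne hch hqrc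
      (fun z hz => hge z (hflat ▸ hz)) (by rw [hflat]; exact hjw)
    rcases h3 with rfl | ⟨c', rfl, hc'ne, hc'j⟩
    · rw [List.append_nil] at h1
      rcases eq_or_ne tail [] with rfl | htne
      · rw [List.append_nil] at h1
        have hs : 1 ≤ s := by
          rcases Nat.eq_zero_or_pos s with rfl | hp
          · exfalso
            apply hwne
            rw [← hflat, h1]
            rfl
          · exact hp
        have hshape : shape w = [s] := by
          unfold shape
          rw [h1, show (List.replicate s [j]).map List.length = List.replicate s 1 by simp]
          exact rowLengths_replicate_one hs
        rw [hshape, h1, hwCols_single]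
      · exfalso
        have hw' : w = List.replicate s j ++ tail.flatten := by
          rw [← hflat, h1, List.flatten_append, flatten_replicate_singleton]
        obtain ⟨g, gs, hg⟩ := List.exists_cons_of_ne_nil htne
        have hgne : g ≠ [] := hne g (by rw [h1, hg]; simp)
        have htfne : tail.flatten ≠ [] := by
          rw [hg, List.flatten_cons]
          intro hh
          exact hgne (List.append_eq_nil_iff.1 hh).1
        obtain ⟨m, hmem, hmle⟩ := min_exists htfne
        have hmw : m ∈ w := by rw [hw']; exact List.mem_append_right _ hmem
        have hmgtj : j < m := lt_of_le_of_ne (hge m hmw) (fun h => h2 (h ▸ hmem))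
        have hmn : m ≤ n := (hword m hmw).2
        rcases eq_or_ne m (j + 1) with hmj | hmj
        · have hq := hhw j (le_refl j) (by omega)
          rw [qe_eq_none_iff] at hq
          rcases hq with hinv | hnm
          · rw [hasInv_iff_sublist, hw'] at hinv
            rcases pair_sublist_append hinv with h' | ⟨ha, hb⟩ | h'
            · have := List.eq_of_mem_replicate (h'.mem (by simp : (j+1) ∈ [j+1, j]))
              omega
            · have := List.eq_of_mem_replicate ha
              omega
            · exact h2 (h'.mem (by simp))
          · exact hnm (by rw [hw']; exact List.mem_append_right _ (hmj ▸ hmem))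
        · have hq := hhw (m - 1) (by omega) (by omega)
          rw [qe_eq_none_iff] at hq
          rcases hq with hinv | hnm
          · have hmmem : (m - 1) ∈ w := hinv.mem_right
            rw [hw'] at hmmem
            rcases List.mem_append.1 hmmem with h' | h'
            · have := List.eq_of_mem_replicate h'
              omega
            · have := hmle _ h'
              omega
          · have h5 : m - 1 + 1 = m := by omega
            rw [h5] at hnm
            exact hnm (by rw [hw']; exact List.mem_append_right _ hmem)
    · -- mid = [c' ++ [j]]
      have h1' : decFactors w = List.replicate s [j] ++ (c' ++ [j]) :: tail := by
        rw [h1]; simp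
      have hmidmem : (c' ++ [j]) ∈ decFactors w := by rw [h1']; simp
      have hmidch := hch _ hmidmem
      have hc'ch : c'.Chain' (fun p q => q < p) := ((List.isChain_append).1 hmidch).1
      have hrt : ((c' ++ [j]) :: tail).Chain' (fun c d => c.getLastD 0 ≤ d.headD 0) := by
        rw [h1', chain'_iff_isChain, List.isChain_append] at hbd
        exact hbd.2.1
      have hrq : ((c' ++ [j]) :: tail).Chain' (fun c d => c.headD 0 ≤ d.getLastD 0) := by
        rw [h1', chain'_iff_isChain, List.isChain_append] at hqrc
        exact hqrc.2.1
      have htailne : ∀ g ∈ tail, g ≠ [] := fun g hg => hne g (by rw [h1']; simp [hg])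
      have htailch : ∀ g ∈ tail, g.Chain' (fun p q => q < p) :=
        fun g hg => hch g (by rw [h1']; simp [hg])
      -- the key link when tail is nonempty
      have hlink : ∀ g ∈ tail.head?, c'.getLastD 0 ≤ g.headD 0 ∧ c'.headD 0 ≤ g.getLastD 0 := by
        intro g hg
        have hgmem : g ∈ tail := List.mem_of_mem_head? hg
        have hgne : g ≠ [] := htailne g hgmem
        have hq1 : (c' ++ [j]).headD 0 ≤ g.getLastD 0 := (List.isChain_cons.1 hrq).1 g hg
        rw [headD_append_of_ne_nil hc'ne] at hq1
        have h6 : c'.getLastD 0 ≤ c'.headD 0 := dec_le_head hc'ch _ (getLastD_mem hc'ne 0)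
        have h7 : g.getLastD 0 ≤ g.headD 0 := dec_le_head (htailch g hgmem) _ (getLastD_mem hgne 0)
        exact ⟨by omega, hq1⟩
      have hdw' : decFactors (c' ++ tail.flatten) = c' :: tail := by
        rw [show c' ++ tail.flatten = (c' :: tail).flatten from rfl]
        apply decFactors_eq
        · intro f hf
          rcases List.mem_cons.1 hf with rfl | hf
          · exact hc'ne
          · exact htailne f hf
        · intro f hf
          rcases List.mem_cons.1 hf with rfl | hf
          · exact hc'ch
          · exact htailch f hf
        · rw [chain'_iff_isChain, List.isChain_cons]
          exact ⟨fun g hg => (hlink g hg).1, hrt.tail⟩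
      have hw4 : w = List.replicate s j ++ (c' ++ j :: tail.flatten) := by
        rw [← hflat, h1', List.flatten_append, flatten_replicate_singleton, List.flatten_cons]
        simp
      have hsubw : ∀ z ∈ c' ++ tail.flatten, z ∈ w := by
        intro z hz
        rw [hw4]
        refine List.mem_append_right _ ?_
        rcases List.mem_append.1 hz with hz | hz
        · exact List.mem_append_left _ hz
        · exact List.mem_append_right _ (List.mem_cons_of_mem _ hz)
      have hw'word : IsWord n (c' ++ tail.flatten) := fun z hz => hword z (hsubw z hz)
      have hw'ge : ∀ a ∈ c' ++ tail.flatten, j + 1 ≤ a := by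
        intro a ha
        have h6 : j ≤ a := hge a (hsubw a ha)
        have h7 : a ≠ j := by
          rcases List.mem_append.1 ha with ha | ha
          · exact fun hh => hc'j (hh ▸ ha)
          · exact fun hh => h2 (hh ▸ ha)
        omega
      have hw'qr : IsQRWord (c' ++ tail.flatten) := by
        unfold IsQRWord
        rw [hdw', chain'_iff_isChain, List.isChain_cons]
        exact ⟨fun g hg => (hlink g hg).2, hrq.tail⟩
      have hw'hw : ∀ i, j + 1 ≤ i → i < n → qe i (c' ++ tail.flatten) = none := by
        intro i hi1 hi2
        have hq := hhw i (by omega) hi2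
        rw [qe_eq_none_iff] at hq ⊢
        rcases hq with hinv | hnm
        · left
          rw [hasInv_iff_sublist] at hinv ⊢
          rw [hw4] at hinv
          refine sublist_removal hinv ?_ ?_ ?_ ?_
          · intro hm; have := List.eq_of_mem_replicate hm; omega
          · intro hm; have := List.eq_of_mem_replicate hm; omega
          · omega
          · omega
        · right
          exact fun hm => hnm (hsubw _ hm)
      have hw'len : (c' ++ tail.flatten).length ≤ N := by
        have := congrArg List.length hw4
        simp only [List.length_append, List.length_replicate, List.length_cons] at this
        simp only [List.length_append]
        omega
      have hih := ih (c' ++ tail.flatten) (j + 1) hw'len hw'word hw'ge hw'qr hw'hw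
      rw [hdw'] at hih
      -- shape bookkeeping
      have hc'len : 1 ≤ c'.length := by
        rcases c' with _ | ⟨z, t⟩
        · exact absurd rfl hc'ne
        · simp
      have hshape : shape w = (s + 1) :: shape (c' ++ tail.flatten) := by
        unfold shape
        rw [h1', hdw']
        rw [List.map_append, List.map_cons,
          show (List.replicate s [j]).map List.length = List.replicate s 1 by simp,
          show (c' ++ [j]).length = c'.length + 1 by simp]
        rw [rowLengths_step hc'len]
        rfl
      have hshapene : shape (c' ++ tail.flatten) ≠ [] := by
        unfold shape
        rw [hdw']
        refine rowLengths_ne_nil ?_ (by simp)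
        intro h hh
        simp only [List.map_cons, List.mem_cons] at hh
        rcases hh with rfl | hh
        · exact hc'len
        · obtain ⟨g, hg, rfl⟩ := List.mem_map.1 hh
          have := htailne g hg
          rcases g with _ | ⟨z, t⟩
          · exact absurd rfl this
          · simp
      obtain ⟨b, rest', hbr⟩ := List.exists_cons_of_ne_nil hshapene
      rw [hshape, hbr]
      rw [hbr] at hih
      rw [hwCols_cons_cons (a := s + 1) hih.symm]
      rw [show s + 1 - 1 = s from rfl]
      exact h1'

end Aux12
end HypoCrystal

namespace HypoCrystal
section Aux13
open List

theorem hw_unique {n : ℕ} {w : List ℕ} (hword : IsWord n w) (hqr : IsQRWord w)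
    (hhw : HighestWeight n w) : w = hwQR (shape w) := by
  have h := hw_main (n := n) w.length w 1 le_rfl hword (fun a ha => (hword a ha).1) hqr hhw
  conv_lhs => rw [← decFactors_flatten w]
  rw [h]
  rfl

theorem S_closed {n : ℕ} {α : List ℕ} {u v : List ℕ}
    (hu : IsWord n u ∧ IsQRWord u ∧ shape u = α) (hadj : Adj n u v) :
    IsWord n v ∧ IsQRWord v ∧ shape v = α := by
  obtain ⟨i, h | h⟩ := hadj
  · obtain ⟨hi1, hi2, hf⟩ := h
    obtain ⟨h1, h2, h3⟩ := qf_preserve hi2 hf hu.1 hu.2.1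
    exact ⟨h1, h2, h3.trans hu.2.2⟩
  · obtain ⟨hi1, hi2, hf⟩ := h
    have he : qe i u = some v := qf_qe_inverse hf
    obtain ⟨h1, h2, h3⟩ := qe_preserve hi1 he hu.1 hu.2.1
    exact ⟨h1, h2, h3.trans hu.2.2⟩

theorem to_hw {n : ℕ} : ∀ (M : ℕ) (u : List ℕ), u.sum ≤ M → IsWord n u → IsQRWord u →
    SameComp n (hwQR (shape u)) u := by
  intro M
  induction M with
  | zero =>
    intro u hsum hword hqr
    by_cases hhw : HighestWeight n u
    · nth_rewrite 2 [show u = hwQR (shape u) from hw_unique hword hqr hhw]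
      exact Relation.ReflTransGen.refl
    · exfalso
      unfold HighestWeight at hhw
      push_neg at hhw
      obtain ⟨i, hi1, hi2, hne⟩ := hhw
      obtain ⟨v, hv⟩ := Option.ne_none_iff_exists'.1 hne
      have := qe_sum hv
      omega
  | succ M ihM =>
    intro u hsum hword hqr
    by_cases hhw : HighestWeight n u
    · nth_rewrite 2 [show u = hwQR (shape u) from hw_unique hword hqr hhw]
      exact Relation.ReflTransGen.refl
    · unfold HighestWeight at hhw
      push_neg at hhw
      obtain ⟨i, hi1, hi2, hne⟩ := hhw
      obtain ⟨v, hv⟩ := Option.ne_none_iff_exists'.1 hne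
      obtain ⟨h1, h2, h3⟩ := qe_preserve hi1 hv hword hqr
      have hsum' := qe_sum hv
      have hcomp := ihM v (by omega) h1 h2
      rw [h3] at hcomp
      refine Relation.ReflTransGen.tail hcomp ?_
      exact ⟨i, Or.inl ⟨hi1, hi2, qe_qf_inverse hv⟩⟩

theorem comp_sub {n : ℕ} {α : List ℕ} (hpos : ∀ a ∈ α, 0 < a) (hlen : α.length ≤ n)
    {w : List ℕ} (h : SameComp n (hwQR α) w) :
    IsWord n w ∧ IsQRWord w ∧ shape w = α := by
  induction h with
  | refl => exact ⟨isWord_hwQR hpos hlen, isQR_hwQR hpos, shape_hwQR hpos⟩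
  | tail _ hbc ih => exact S_closed ih hbc

end Aux13
end HypoCrystal

namespace HypoCrystal

/-- Let `α` be a composition with `ℓ(α) ≤ n`. Then (1) the set of
quasi-ribbon words in `𝒜_n^*` of shape `α` is exactly the vertex set of a single
connected component of `Γ(hypo_n)`; and (2) this component contains a unique
highest-weight word, namely the column reading `hwQR α` of the quasi-ribbon tableau
of shape `α` whose `j`-th row consists entirely of symbols `j`. -/
theorem quasiRibbon_words_single_component (n : ℕ) (α : List ℕ)
    (hpos : ∀ a ∈ α, 0 < a) (hlen : α.length ≤ n) :
    (∃ w₀, {w | IsWord n w ∧ IsQRWord w ∧ shape w = α} = {w | SameComp n w₀ w}) ∧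
    (IsWord n (hwQR α) ∧ IsQRWord (hwQR α) ∧ shape (hwQR α) = α) ∧
    (∀ w, IsWord n w → IsQRWord w → shape w = α →
      (HighestWeight n w ↔ w = hwQR α)) := by
  refine ⟨⟨hwQR α, ?_⟩, ⟨isWord_hwQR hpos hlen, isQR_hwQR hpos, shape_hwQR hpos⟩, ?_⟩
  · ext w
    simp only [Set.mem_setOf_eq]
    constructor
    · rintro ⟨hword, hqr, hsh⟩
      have h := to_hw w.sum w le_rfl hword hqr
      rw [hsh] at h
      exact h
    · exact comp_sub hpos hlen
  · intro w hword hqr hsh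
    constructor
    · intro hhw
      have h := hw_unique hword hqr hhw
      rw [hsh] at h
      exact h
    · rintro rfl
      exact hw_hwQR hpos hlen

end HypoCrystal
end

section
/- For all u, v ∈ 𝒜_n^*, if u ≡_hypo v then u ∼ v. -/
namespace HypoCrystal

noncomputable section
open scoped Classical

/-- `x` has the same order pattern as `w`. -/
def Pat (x w : List ℕ) : Prop :=
  x.length = w.length ∧ ∀ p q, p < q → q < w.length →
    (x.getD p 0 ≤ x.getD q 0 ↔ w.getD p 0 ≤ w.getD q 0)

lemma Pat.refl (x : List ℕ) : Pat x x := ⟨rfl, fun _ _ _ _ => Iff.rfl⟩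

lemma Pat.symm {x w : List ℕ} (h : Pat x w) : Pat w x := by
  have h1 := h.1
  exact ⟨h1.symm, fun p q hpq hq => (h.2 p q hpq (by omega)).symm⟩

lemma Pat.trans {x w z : List ℕ} (h : Pat x w) (h' : Pat w z) : Pat x z := by
  have h1 := h'.1
  exact ⟨h.1.trans h'.1, fun p q hpq hq =>
    (h.2 p q hpq (by omega)).trans (h'.2 p q hpq hq)⟩

/-- number of indices of `y` whose entry is `≤ c`. -/
def cntle (y : List ℕ) (c : ℕ) : ℕ :=
  ((Finset.range y.length).filter fun q => y.getD q 0 ≤ c).card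

/-- number of indices of `y` whose entry is `< c`. -/
def cntlt (y : List ℕ) (c : ℕ) : ℕ :=
  ((Finset.range y.length).filter fun q => y.getD q 0 < c).card

/-- the rank of position `p`: number of positions lexicographically smaller. -/
def rk (y : List ℕ) (p : ℕ) : ℕ :=
  ((Finset.range y.length).filter fun q =>
    y.getD q 0 < y.getD p 0 ∨ (y.getD q 0 = y.getD p 0 ∧ q < p)).card

lemma cnt_bridge (P : ℕ → Prop) (y : List ℕ) :
    ((Finset.range y.length).filter fun q => P (y.getD q 0)).card
      = y.countP (fun a => decide (P a)) := by
  induction y using List.reverseRecOn with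
  | nil => simp
  | append_singleton y a ih =>
    have hgetD : ∀ q < y.length, (y ++ [a]).getD q 0 = y.getD q 0 := fun q hq =>
      List.getD_append _ _ _ _ hq
    have hlast : (y ++ [a]).getD y.length 0 = a := by
      rw [List.getD_append_right _ _ _ _ le_rfl]
      simp
    have hfc : (Finset.range y.length).filter (fun q => P ((y ++ [a]).getD q 0))
        = (Finset.range y.length).filter (fun q => P (y.getD q 0)) := by
      apply Finset.filter_congr
      intro q hq
      simp only [Finset.mem_range] at hq
      rw [hgetD q hq]
    rw [List.countP_append, List.length_append, List.length_singleton,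
      Finset.range_add_one, Finset.filter_insert]
    by_cases hP : P a
    · rw [if_pos (by rwa [hlast]), Finset.card_insert_of_notMem (by simp), hfc, ih]
      simp [List.countP_cons, hP]
    · rw [if_neg (by rwa [hlast]), hfc, ih]
      simp [List.countP_cons, hP]

lemma cntle_eq_countP (y : List ℕ) (c : ℕ) :
    cntle y c = y.countP (fun a => decide (a ≤ c)) := by
  unfold cntle
  convert cnt_bridge (fun a => a ≤ c) y using 3
  simp [decide_eq_decide]

lemma cntlt_eq_countP (y : List ℕ) (c : ℕ) :
    cntlt y c = y.countP (fun a => decide (a < c)) := by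
  unfold cntlt
  convert cnt_bridge (fun a => a < c) y using 3
  simp [decide_eq_decide]

lemma cntle_perm {y z : List ℕ} (h : y.Perm z) (c : ℕ) : cntle y c = cntle z c := by
  rw [cntle_eq_countP, cntle_eq_countP]; exact h.countP_eq _

lemma cntlt_perm {y z : List ℕ} (h : y.Perm z) (c : ℕ) : cntlt y c = cntlt z c := by
  rw [cntlt_eq_countP, cntlt_eq_countP]; exact h.countP_eq _

lemma cntle_le_length (y : List ℕ) (c : ℕ) : cntle y c ≤ y.length := by
  rw [cntle]
  exact (Finset.card_filter_le _ _).trans (by simp)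

/-- threshold lemma. -/
lemma le_iff_rk_lt_cntle {y : List ℕ} {p : ℕ} (hp : p < y.length) (c : ℕ) :
    y.getD p 0 ≤ c ↔ rk y p < cntle y c := by
  constructor
  · intro h
    have hsub : insert p ((Finset.range y.length).filter fun q =>
        y.getD q 0 < y.getD p 0 ∨ (y.getD q 0 = y.getD p 0 ∧ q < p)) ⊆
        (Finset.range y.length).filter fun q => y.getD q 0 ≤ c := by
      intro q hq
      simp only [Finset.mem_insert, Finset.mem_filter, Finset.mem_range] at hq ⊢
      rcases hq with rfl | ⟨hq1, hq2⟩
      · exact ⟨hp, h⟩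
      · exact ⟨hq1, by omega⟩
    have hnot : p ∉ (Finset.range y.length).filter fun q =>
        y.getD q 0 < y.getD p 0 ∨ (y.getD q 0 = y.getD p 0 ∧ q < p) := by
      simp
    have := Finset.card_le_card hsub
    rw [Finset.card_insert_of_notMem hnot] at this
    rw [rk, cntle]; omega
  · intro h
    by_contra hc
    push_neg at hc
    have hsub : ((Finset.range y.length).filter fun q => y.getD q 0 ≤ c) ⊆
        (Finset.range y.length).filter fun q =>
          y.getD q 0 < y.getD p 0 ∨ (y.getD q 0 = y.getD p 0 ∧ q < p) := by
      intro q hq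
      simp only [Finset.mem_filter, Finset.mem_range] at hq ⊢
      exact ⟨hq.1, Or.inl (by omega)⟩
    have := Finset.card_le_card hsub
    rw [← rk, ← cntle] at this
    omega

lemma rk_lt_length {y : List ℕ} {p : ℕ} (hp : p < y.length) : rk y p < y.length := by
  have h := (le_iff_rk_lt_cntle hp (y.getD p 0)).mp le_rfl
  exact h.trans_le (cntle_le_length y _)

lemma cntlt_le_rk {y : List ℕ} {p : ℕ} (hp : p < y.length) : cntlt y (y.getD p 0) ≤ rk y p := by
  apply Finset.card_le_card
  intro q hq
  simp only [Finset.mem_filter, Finset.mem_range] at hq ⊢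
  exact ⟨hq.1, Or.inl hq.2⟩

lemma cntle_le_cntlt {y : List ℕ} {a b : ℕ} (h : a < b) : cntle y a ≤ cntlt y b := by
  apply Finset.card_le_card
  intro q hq
  simp only [Finset.mem_filter, Finset.mem_range] at hq ⊢
  omega

/-- the value at a position is determined by its rank and the multiset. -/
lemma val_eq_of_rk_eq {y z : List ℕ} (hperm : y.Perm z) {p r : ℕ}
    (hp : p < y.length) (hr : r < z.length) (h : rk y p = rk z r) :
    y.getD p 0 = z.getD r 0 := by
  have h1 : cntlt y (y.getD p 0) ≤ rk y p := cntlt_le_rk hp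
  have h2 : rk y p < cntle y (y.getD p 0) := (le_iff_rk_lt_cntle hp _).mp le_rfl
  have h3 : cntlt z (z.getD r 0) ≤ rk z r := cntlt_le_rk hr
  have h4 : rk z r < cntle z (z.getD r 0) := (le_iff_rk_lt_cntle hr _).mp le_rfl
  rcases Nat.lt_trichotomy (y.getD p 0) (z.getD r 0) with hlt | heq | hgt
  · have h7 := cntle_le_cntlt (y := y) hlt
    have h8 : cntlt y (z.getD r 0) = cntlt z (z.getD r 0) := cntlt_perm hperm _
    omega
  · exact heq
  · have h7 := cntle_le_cntlt (y := z) hgt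
    have h8 : cntlt z (y.getD p 0) = cntlt y (y.getD p 0) := (cntlt_perm hperm _).symm
    omega

/-- rank is invariant under order-pattern equivalence. -/
lemma rk_pat {y w : List ℕ} (h : Pat y w) {p : ℕ} (hp : p < w.length) :
    rk y p = rk w p := by
  rw [rk, rk, h.1]
  congr 1
  apply Finset.filter_congr
  intro q hq
  simp only [Finset.mem_range] at hq
  rcases Nat.lt_trichotomy q p with hqp | rfl | hpq
  · have h1 : y.getD q 0 ≤ y.getD p 0 ↔ w.getD q 0 ≤ w.getD p 0 := h.2 q p hqp hp
    constructor <;> intro hc <;> omega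
  · constructor <;> intro hc <;> omega
  · have h1 : y.getD p 0 ≤ y.getD q 0 ↔ w.getD p 0 ≤ w.getD q 0 := h.2 p q hpq hq
    constructor <;> intro hc <;> omega

/-- ranks are strictly monotone with respect to the lexicographic order. -/
lemma rk_strict {y : List ℕ} {p q : ℕ} (hp : p < y.length) (hq : q < y.length)
    (hlex : y.getD p 0 < y.getD q 0 ∨ (y.getD p 0 = y.getD q 0 ∧ p < q)) :
    rk y p < rk y q := by
  have hsub : insert p ((Finset.range y.length).filter fun r =>
      y.getD r 0 < y.getD p 0 ∨ (y.getD r 0 = y.getD p 0 ∧ r < p)) ⊆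
      (Finset.range y.length).filter fun r =>
        y.getD r 0 < y.getD q 0 ∨ (y.getD r 0 = y.getD q 0 ∧ r < q) := by
    intro r hr
    simp only [Finset.mem_insert, Finset.mem_filter, Finset.mem_range] at hr ⊢
    rcases hr with rfl | ⟨hr1, hr2⟩
    · exact ⟨hp, by omega⟩
    · exact ⟨hr1, by omega⟩
  have hnot : p ∉ (Finset.range y.length).filter fun r =>
      y.getD r 0 < y.getD p 0 ∨ (y.getD r 0 = y.getD p 0 ∧ r < p) := by simp
  have := Finset.card_le_card hsub
  rw [Finset.card_insert_of_notMem hnot] at this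
  rw [rk, rk]; omega

/-- ranks are injective on positions. -/
lemma rk_inj {y : List ℕ} {p q : ℕ} (hp : p < y.length) (hq : q < y.length)
    (h : rk y p = rk y q) : p = q := by
  by_contra hne
  rcases Nat.lt_trichotomy (y.getD p 0) (y.getD q 0) with hlt | heq | hgt
  · have := rk_strict hp hq (Or.inl hlt); omega
  · rcases Nat.lt_trichotomy p q with h1 | h1 | h1
    · have := rk_strict hp hq (Or.inr ⟨heq, h1⟩); omega
    · exact hne h1
    · have := rk_strict hq hp (Or.inr ⟨heq.symm, h1⟩); omega
  · have := rk_strict hq hp (Or.inl hgt); omega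

/-- ranks are surjective onto `range (length)`. -/
lemma rk_surj {y : List ℕ} {k : ℕ} (hk : k < y.length) :
    ∃ p < y.length, rk y p = k := by
  have himg : (Finset.range y.length).image (rk y) = Finset.range y.length := by
    apply Finset.eq_of_subset_of_card_le
    · intro m hm
      simp only [Finset.mem_image, Finset.mem_range] at hm ⊢
      rcases hm with ⟨p, hp, rfl⟩
      exact rk_lt_length hp
    · rw [Finset.card_image_of_injOn, Finset.card_range]
      intro p hp q hq h
      simp only [Finset.mem_coe, Finset.mem_range] at hp hq
      exact rk_inj hp hq h
  have : k ∈ (Finset.range y.length).image (rk y) := by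
    rw [himg]; exact Finset.mem_range.mpr hk
  simp only [Finset.mem_image, Finset.mem_range] at this
  rcases this with ⟨p, hp, hpk⟩
  exact ⟨p, hp, hpk⟩

/-- a word is determined by its order pattern and its multiset. -/
lemma eq_of_pat_perm {y z : List ℕ} (hpat : Pat y z) (hperm : y.Perm z) : y = z := by
  apply List.ext_getElem hpat.1
  intro p h1 h2
  have := val_eq_of_rk_eq hperm h1 h2 (by rw [rk_pat hpat h2])
  rwa [List.getD_eq_getElem, List.getD_eq_getElem] at this

end
section
open scoped Classical

/-- index characterization of `HasInv`. -/
lemma hasInv_iff (i : ℕ) (u : List ℕ) :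
    HasInv i u ↔ ∃ p q, p < q ∧ q < u.length ∧ u.getD p 0 = i + 1 ∧ u.getD q 0 = i := by
  constructor
  · rintro ⟨v, w, x, rfl⟩
    refine ⟨v.length, v.length + w.length + 1, by omega, ?_, ?_, ?_⟩
    · simp [List.length_append]; omega
    · rw [List.getD_append _ _ _ _ (by simp only [List.length_append, List.length_cons]; omega),
        List.getD_append_right _ _ _ _ le_rfl]
      simp
    · rw [List.getD_append_right _ _ _ _ (by simp only [List.length_append, List.length_cons]; omega)]
      have : v.length + w.length + 1 - (v ++ (i+1) :: w).length = 0 := by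
        simp only [List.length_append, List.length_cons]
        omega
      rw [this]
      simp
  · rintro ⟨p, q, hpq, hq, hp1, hq1⟩
    have hp : p < u.length := by omega
    have h1 : u.drop p = (i+1) :: u.drop (p+1) := by
      rw [← List.getElem_cons_drop hp]
      congr 1
      rw [← List.getD_eq_getElem u 0 hp, hp1]
    have h2 : u.drop q = i :: u.drop (q+1) := by
      rw [← List.getElem_cons_drop hq]
      congr 1
      rw [← List.getD_eq_getElem u 0 hq, hq1]
    have htakeq : u.take q = u.take p ++ (i+1) :: ((u.drop (p+1)).take (q - p - 1)) := by
      have : q = p + (q - p - 1 + 1) := by omega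
      rw [this, List.take_add, h1]
      simp
    refine ⟨u.take p, (u.drop (p+1)).take (q - p - 1), u.drop (q+1), ?_⟩
    conv_lhs => rw [← List.take_append_drop q u, h2, htakeq]

lemma hasInv3 (i P Q R : ℕ) :
    HasInv i [P, Q, R] ↔ (P = i+1 ∧ Q = i) ∨ (P = i+1 ∧ R = i) ∨ (Q = i+1 ∧ R = i) := by
  rw [hasInv_iff]
  constructor
  · rintro ⟨p, q, h1, h2, h3, h4⟩
    simp only [List.length_cons, List.length_nil] at h2
    interval_cases q <;> interval_cases p <;> simp_all
  · rintro (⟨h1, h2⟩ | ⟨h1, h2⟩ | ⟨h1, h2⟩)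
    · exact ⟨0, 1, by omega, by simp, by simpa, by simpa⟩
    · exact ⟨0, 2, by omega, by simp, by simpa, by simpa⟩
    · exact ⟨1, 2, by omega, by simp, by simpa, by simpa⟩

lemma hasInv4 (i P Q R S : ℕ) :
    HasInv i [P, Q, R, S] ↔ (P = i+1 ∧ Q = i) ∨ (P = i+1 ∧ R = i) ∨ (P = i+1 ∧ S = i)
      ∨ (Q = i+1 ∧ R = i) ∨ (Q = i+1 ∧ S = i) ∨ (R = i+1 ∧ S = i) := by
  rw [hasInv_iff]
  constructor
  · rintro ⟨p, q, h1, h2, h3, h4⟩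
    simp only [List.length_cons, List.length_nil] at h2
    interval_cases q <;> interval_cases p <;> simp_all
  · rintro (⟨h1, h2⟩ | ⟨h1, h2⟩ | ⟨h1, h2⟩ | ⟨h1, h2⟩ | ⟨h1, h2⟩ | ⟨h1, h2⟩)
    · exact ⟨0, 1, by omega, by simp, by simpa, by simpa⟩
    · exact ⟨0, 2, by omega, by simp, by simpa, by simpa⟩
    · exact ⟨0, 3, by omega, by simp, by simpa, by simpa⟩
    · exact ⟨1, 2, by omega, by simp, by simpa, by simpa⟩
    · exact ⟨1, 3, by omega, by simp, by simpa, by simpa⟩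
    · exact ⟨2, 3, by omega, by simp, by simpa, by simpa⟩

/-- `HasInv` on a concatenation. -/
lemma hasInv_append (i : ℕ) (x₁ x₂ : List ℕ) :
    HasInv i (x₁ ++ x₂) ↔ HasInv i x₁ ∨ HasInv i x₂ ∨ ((i+1) ∈ x₁ ∧ i ∈ x₂) := by
  constructor
  · rw [hasInv_iff]
    rintro ⟨p, q, h1, h2, h3, h4⟩
    rw [List.length_append] at h2
    by_cases hq : q < x₁.length
    · left
      rw [hasInv_iff]
      refine ⟨p, q, h1, hq, ?_, ?_⟩
      · rw [← h3, List.getD_append _ _ _ _ (by omega)]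
      · rw [← h4, List.getD_append _ _ _ _ hq]
    · by_cases hp : p < x₁.length
      · right; right
        constructor
        · rw [← h3, List.getD_append _ _ _ _ hp]
          rw [List.getD_eq_getElem _ 0 hp]
          exact List.getElem_mem hp
        · rw [← h4, List.getD_append_right _ _ _ _ (by omega)]
          rw [List.getD_eq_getElem _ 0 (by omega)]
          apply List.getElem_mem
      · right; left
        rw [hasInv_iff]
        refine ⟨p - x₁.length, q - x₁.length, by omega, by omega, ?_, ?_⟩
        · rw [← h3, List.getD_append_right _ _ _ _ (by omega)]
        · rw [← h4, List.getD_append_right _ _ _ _ (by omega)]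
  · rintro (⟨v, w, x, h⟩ | ⟨v, w, x, h⟩ | ⟨h1, h2⟩)
    · exact ⟨v, w, x ++ x₂, by rw [h]; simp⟩
    · exact ⟨x₁ ++ v, w, x, by rw [h]; simp⟩
    · rcases List.append_of_mem h1 with ⟨v, w, rfl⟩
      rcases List.append_of_mem h2 with ⟨s, t, rfl⟩
      exact ⟨v, w ++ s, t, by simp⟩

lemma replaceFirst_eq_none_iff {a b : ℕ} {l : List ℕ} :
    replaceFirst a b l = none ↔ a ∉ l := by
  induction l with
  | nil => simp [replaceFirst]
  | cons x xs ih =>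
    by_cases hx : x = a
    · subst hx; simp [replaceFirst]
    · simp [replaceFirst, hx, Option.map_eq_none_iff, ih, Ne.symm hx]

lemma replaceFirst_eq_some {a b : ℕ} {l r : List ℕ} (h : replaceFirst a b l = some r) :
    ∃ s t, l = s ++ a :: t ∧ a ∉ s ∧ r = s ++ b :: t := by
  induction l generalizing r with
  | nil => simp [replaceFirst] at h
  | cons x xs ih =>
    by_cases hx : x = a
    · subst hx
      have h' : some (b :: xs) = some r := by rw [← h]; simp [replaceFirst]
      obtain rfl := Option.some_inj.mp h'
      exact ⟨[], xs, rfl, by simp, rfl⟩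
    · simp only [replaceFirst, if_neg hx, Option.map_eq_some_iff] at h
      rcases h with ⟨r', hr', rfl⟩
      rcases ih hr' with ⟨s, t, rfl, hns, rfl⟩
      exact ⟨x :: s, t, rfl, by simp only [List.mem_cons, not_or]; exact ⟨fun h => hx h.symm, hns⟩, rfl⟩

/-- structure of a successful application of `qf`. -/
lemma qf_eq_some {i : ℕ} {x y : List ℕ} (h : qf i x = some y) :
    ¬ HasInv i x ∧ ∃ x₁ x₂, x = x₁ ++ i :: x₂ ∧ i ∉ x₂ ∧ y = x₁ ++ (i+1) :: x₂ := by
  rw [qf] at h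
  split_ifs at h with hinv
  refine ⟨hinv, ?_⟩
  rw [Option.map_eq_some_iff] at h
  rcases h with ⟨r, hr, rfl⟩
  rcases replaceFirst_eq_some hr with ⟨s, t, hst, hns, rfl⟩
  refine ⟨t.reverse, s.reverse, ?_, by simpa using hns, by simp⟩
  have := congrArg List.reverse hst
  simpa using this

/-- `qf` succeeds iff no inversion and the letter occurs. -/
lemma qf_isSome {i : ℕ} {x : List ℕ} (hinv : ¬ HasInv i x) (hmem : i ∈ x) :
    ∃ y, qf i x = some y := by
  rw [qf, if_neg hinv]
  have : replaceFirst i (i+1) x.reverse ≠ none := by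
    intro hc
    rw [replaceFirst_eq_none_iff] at hc
    exact hc (by simpa using hmem)
  rcases Option.ne_none_iff_exists'.mp this with ⟨r, hr⟩
  exact ⟨r.reverse, by rw [hr]; rfl⟩

lemma mem_of_qf {i : ℕ} {x y : List ℕ} (h : qf i x = some y) : i ∈ x := by
  rcases qf_eq_some h with ⟨-, x₁, x₂, rfl, -, -⟩
  simp

end
section
open scoped Classical

lemma getD_split_left {x₁ x₂ : List ℕ} {a : ℕ} {q : ℕ} (h : q < x₁.length) :
    (x₁ ++ a :: x₂).getD q 0 = x₁.getD q 0 := List.getD_append _ _ _ _ h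

lemma getD_split_mid (x₁ x₂ : List ℕ) (a : ℕ) :
    (x₁ ++ a :: x₂).getD x₁.length 0 = a := by
  rw [List.getD_append_right _ _ _ _ le_rfl]
  simp

lemma getD_split_right {x₁ x₂ : List ℕ} {a : ℕ} {q : ℕ} (h : x₁.length < q) :
    (x₁ ++ a :: x₂).getD q 0 = x₂.getD (q - x₁.length - 1) 0 := by
  rw [List.getD_append_right _ _ _ _ (by omega)]
  have : q - x₁.length = (q - x₁.length - 1) + 1 := by omega
  rw [this]
  simp

/-- `qf` preserves the order pattern. -/
lemma pat_qf {i : ℕ} {x y : List ℕ} (h : qf i x = some y) : Pat y x := by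
  obtain ⟨hninv, x₁, x₂, rfl, hnmem, rfl⟩ := qf_eq_some h
  rw [hasInv_iff] at hninv
  push_neg at hninv
  constructor
  · simp
  · intro p q hpq hq
    simp only [List.length_append, List.length_cons] at hq
    rcases Nat.lt_trichotomy q x₁.length with h1 | rfl | h1
    · rw [getD_split_left h1, getD_split_left h1, getD_split_left (by omega),
        getD_split_left (by omega)]
    · rw [getD_split_mid, getD_split_mid, getD_split_left hpq, getD_split_left hpq]
      have hne : x₁.getD p 0 ≠ i + 1 := by
        intro hc
        have := hninv p x₁.length (by omega) (by simp only [List.length_append, List.length_cons]; omega)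
        rw [getD_split_left hpq, getD_split_mid] at this
        exact this hc rfl
      omega
    · rcases Nat.lt_trichotomy p x₁.length with h2 | rfl | h2
      · rw [getD_split_left h2, getD_split_left h2, getD_split_right h1,
          getD_split_right h1]
      · rw [getD_split_mid, getD_split_mid, getD_split_right h1, getD_split_right h1]
        have hmem : x₂.getD (q - x₁.length - 1) 0 ∈ x₂ := by
          have hlt : q - x₁.length - 1 < x₂.length := by omega
          rw [List.getD_eq_getElem _ 0 hlt]
          exact List.getElem_mem hlt
        have hne : x₂.getD (q - x₁.length - 1) 0 ≠ i := fun hc => hnmem (hc ▸ hmem)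
        omega
      · rw [getD_split_right h1, getD_split_right h1, getD_split_right h2,
          getD_split_right h2]

lemma count_qf {i : ℕ} {x y : List ℕ} (h : qf i x = some y) (a : ℕ) :
    y.count a + (if a = i then 1 else 0) = x.count a + (if a = i + 1 then 1 else 0) := by
  obtain ⟨-, x₁, x₂, rfl, -, rfl⟩ := qf_eq_some h
  rw [List.count_append, List.count_append, List.count_cons, List.count_cons]
  simp only [beq_iff_eq]
  split_ifs <;> omega

lemma perm_qf_results {i : ℕ} {x x' y y' : List ℕ} (hxx' : x.Perm x')
    (h : qf i x = some y) (h' : qf i x' = some y') : y.Perm y' := by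
  rw [List.perm_iff_count]
  intro a
  have c1 := count_qf h a
  have c2 := count_qf h' a
  have c3 := hxx'.count_eq a
  omega

/-- the key transfer property of pairs of words. -/
def Phi (u v : List ℕ) : Prop :=
  u.Perm v ∧
  (∀ x, Pat x u → ∃ x', Pat x' v ∧ x.Perm x' ∧ ∀ i, (HasInv i x ↔ HasInv i x')) ∧
  (∀ x', Pat x' v → ∃ x, Pat x u ∧ x.Perm x' ∧ ∀ i, (HasInv i x ↔ HasInv i x'))

lemma Phi.refl (u : List ℕ) : Phi u u :=
  ⟨List.Perm.refl u,
   fun x hx => ⟨x, hx, List.Perm.refl x, fun _ => Iff.rfl⟩,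
   fun x hx => ⟨x, hx, List.Perm.refl x, fun _ => Iff.rfl⟩⟩

lemma Phi.symm {u v : List ℕ} (h : Phi u v) : Phi v u :=
  ⟨h.1.symm,
   fun x hx => (h.2.2 x hx).imp fun x' ⟨h1, h2, h3⟩ => ⟨h1, h2.symm, fun i => (h3 i).symm⟩,
   fun x hx => (h.2.1 x hx).imp fun x' ⟨h1, h2, h3⟩ => ⟨h1, h2.symm, fun i => (h3 i).symm⟩⟩

lemma Phi.trans {u v w : List ℕ} (h : Phi u v) (h' : Phi v w) : Phi u w := by
  refine ⟨h.1.trans h'.1, ?_, ?_⟩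
  · intro x hx
    obtain ⟨x', h1, h2, h3⟩ := h.2.1 x hx
    obtain ⟨x'', h4, h5, h6⟩ := h'.2.1 x' h1
    exact ⟨x'', h4, h2.trans h5, fun i => (h3 i).trans (h6 i)⟩
  · intro x hx
    obtain ⟨x', h1, h2, h3⟩ := h'.2.2 x hx
    obtain ⟨x'', h4, h5, h6⟩ := h.2.2 x' h1
    exact ⟨x'', h4, h5.trans h2, fun i => (h6 i).trans (h3 i)⟩

/-- transport of `qf` across a `Phi`-pair. -/
lemma transport {u v x x' y : List ℕ} {i : ℕ} (hPhi : Phi u v) (hx : Pat x u)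
    (hx' : Pat x' v) (hperm : x.Perm x') (h : qf i x = some y) :
    ∃ y', qf i x' = some y' ∧ Pat y x ∧ Pat y' x' ∧ y.Perm y' := by
  obtain ⟨hninv, -⟩ := qf_eq_some h
  obtain ⟨x'', hx'', hperm'', hiff⟩ := hPhi.2.1 x hx
  have heq : x'' = x' := eq_of_pat_perm (hx''.trans hx'.symm) (hperm''.symm.trans hperm)
  rw [heq] at hperm'' hiff
  have hninv' : ¬ HasInv i x' := fun hc => hninv ((hiff i).mpr hc)
  obtain ⟨y', hy'⟩ := qf_isSome hninv' (hperm.mem_iff.mp (mem_of_qf h))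
  exact ⟨y', hy', pat_qf h, pat_qf hy', perm_qf_results hperm h hy'⟩

end
section
open scoped Classical

lemma pat3_iff {x : List ℕ} {a b c : ℕ} :
    Pat x [a, b, c] ↔ ∃ X Y Z, x = [X, Y, Z] ∧ (X ≤ Y ↔ a ≤ b) ∧ (X ≤ Z ↔ a ≤ c)
      ∧ (Y ≤ Z ↔ b ≤ c) := by
  constructor
  · intro h
    have hlen := h.1
    simp only [List.length_cons, List.length_nil] at hlen
    rcases x with _ | ⟨X, _ | ⟨Y, _ | ⟨Z, _ | _⟩⟩⟩ <;> simp_all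
    refine ⟨?_, ?_, ?_⟩
    · simpa using h.2 0 1 (by omega) (by simp)
    · simpa using h.2 0 2 (by omega) (by simp)
    · simpa using h.2 1 2 (by omega) (by simp)
  · rintro ⟨X, Y, Z, rfl, h1, h2, h3⟩
    refine ⟨by simp, ?_⟩
    intro p q hpq hq
    simp only [List.length_cons, List.length_nil] at hq
    interval_cases q <;> interval_cases p <;> simpa using by assumption

lemma pat4_iff {x : List ℕ} {a b c d : ℕ} :
    Pat x [a, b, c, d] ↔ ∃ X Y Z W, x = [X, Y, Z, W] ∧ (X ≤ Y ↔ a ≤ b) ∧ (X ≤ Z ↔ a ≤ c)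
      ∧ (X ≤ W ↔ a ≤ d) ∧ (Y ≤ Z ↔ b ≤ c) ∧ (Y ≤ W ↔ b ≤ d) ∧ (Z ≤ W ↔ c ≤ d) := by
  constructor
  · intro h
    have hlen := h.1
    simp only [List.length_cons, List.length_nil] at hlen
    rcases x with _ | ⟨X, _ | ⟨Y, _ | ⟨Z, _ | ⟨W, _ | _⟩⟩⟩⟩ <;> simp_all
    refine ⟨?_, ?_, ?_, ?_, ?_, ?_⟩
    · simpa using h.2 0 1 (by omega) (by simp)
    · simpa using h.2 0 2 (by omega) (by simp)
    · simpa using h.2 0 3 (by omega) (by simp)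
    · simpa using h.2 1 2 (by omega) (by simp)
    · simpa using h.2 1 3 (by omega) (by simp)
    · simpa using h.2 2 3 (by omega) (by simp)
  · rintro ⟨X, Y, Z, W, rfl, h1, h2, h3, h4, h5, h6⟩
    refine ⟨by simp, ?_⟩
    intro p q hpq hq
    simp only [List.length_cons, List.length_nil] at hq
    interval_cases q <;> interval_cases p <;> simpa using by assumption

set_option maxHeartbeats 1000000 in
lemma phi_rel {n : ℕ} {u v : List ℕ} (h : HypoRel n u v) : Phi u v := by
  cases h with
  | @knuth1 a b c h1 hab hbc h2 =>
    refine ⟨List.Perm.swap _ _ _, ?_, ?_⟩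
    · intro x hx
      rw [pat3_iff] at hx
      obtain ⟨X, Y, Z, rfl, g1, g2, g3⟩ := hx
      have f1 : X ≤ Z := g2.mpr hab
      have f2 : Z < Y := by omega
      refine ⟨[Y, X, Z], pat3_iff.mpr ⟨Y, X, Z, rfl, by omega, by omega, by omega⟩,
        List.Perm.swap Y X [Z], fun i => ?_⟩
      rw [hasInv3, hasInv3]; omega
    · intro x hx
      rw [pat3_iff] at hx
      obtain ⟨C, A, B, rfl, g1, g2, g3⟩ := hx
      have f1 : A ≤ B := g3.mpr hab
      have f2 : B < C := by omega
      refine ⟨[A, C, B], pat3_iff.mpr ⟨A, C, B, rfl, by omega, by omega, by omega⟩,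
        List.Perm.swap C A [B], fun i => ?_⟩
      rw [hasInv3, hasInv3]; omega
  | @knuth2 a b c h1 hab hbc h2 =>
    refine ⟨(List.Perm.swap _ _ _).cons _, ?_, ?_⟩
    · intro x hx
      rw [pat3_iff] at hx
      obtain ⟨X, Y, Z, rfl, g1, g2, g3⟩ := hx
      have f1 : Y < X := by omega
      have f2 : X ≤ Z := g2.mpr hbc
      refine ⟨[X, Z, Y], pat3_iff.mpr ⟨X, Z, Y, rfl, by omega, by omega, by omega⟩,
        (List.Perm.swap Z Y []).cons X, fun i => ?_⟩
      rw [hasInv3, hasInv3]; omega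
    · intro x hx
      rw [pat3_iff] at hx
      obtain ⟨X, Z, Y, rfl, g1, g2, g3⟩ := hx
      have f1 : X ≤ Z := g1.mpr hbc
      have f2 : Y < X := by omega
      refine ⟨[X, Y, Z], pat3_iff.mpr ⟨X, Y, Z, rfl, by omega, by omega, by omega⟩,
        (List.Perm.swap Z Y []).cons X, fun i => ?_⟩
      rw [hasInv3, hasInv3]; omega
  | @quasi1 a b c d h1 hab hbc hcd h2 =>
    have hperm : [c, a, d, b].Perm [a, c, b, d] :=
      (List.Perm.swap a c [d, b]).trans (((List.Perm.swap b d []).cons c).cons a)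
    refine ⟨hperm, ?_, ?_⟩
    · intro x hx
      rw [pat4_iff] at hx
      obtain ⟨C, A, D, B, rfl, g1, g2, g3, g4, g5, g6⟩ := hx
      have f1 : A < C := by omega
      have f2 : C ≤ D := g2.mpr hcd
      have f3 : B < C := by omega
      have f4 : A ≤ B := g5.mpr hab
      have f5 : B < D := by omega
      refine ⟨[A, C, B, D], pat4_iff.mpr ⟨A, C, B, D, rfl, by omega, by omega, by omega,
        by omega, by omega, by omega⟩,
        (List.Perm.swap A C [D, B]).trans (((List.Perm.swap B D []).cons C).cons A),
        fun i => ?_⟩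
      rw [hasInv4, hasInv4]; omega
    · intro x hx
      rw [pat4_iff] at hx
      obtain ⟨A, C, B, D, rfl, g1, g2, g3, g4, g5, g6⟩ := hx
      have f1 : A ≤ C := g1.mpr (by omega)
      have f2 : A ≤ B := g2.mpr hab
      have f3 : B < C := by omega
      have f4 : C ≤ D := g5.mpr hcd
      have f5 : B < D := by omega
      refine ⟨[C, A, D, B], pat4_iff.mpr ⟨C, A, D, B, rfl, by omega, by omega, by omega,
        by omega, by omega, by omega⟩,
        (List.Perm.swap A C [D, B]).trans (((List.Perm.swap B D []).cons C).cons A),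
        fun i => ?_⟩
      rw [hasInv4, hasInv4]; omega
  | @quasi2 a b c d h1 hab hbc hcd h2 =>
    have hperm : [b, d, a, c].Perm [d, b, c, a] :=
      (List.Perm.swap d b [a, c]).trans (((List.Perm.swap c a []).cons b).cons d)
    refine ⟨hperm, ?_, ?_⟩
    · intro x hx
      rw [pat4_iff] at hx
      obtain ⟨B, D, A, C, rfl, g1, g2, g3, g4, g5, g6⟩ := hx
      have f1 : B ≤ D := g1.mpr (by omega)
      have f2 : A < B := by omega
      have f3 : B ≤ C := g3.mpr hbc
      have f4 : A < D := by omega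
      have f5 : C < D := by omega
      have f6 : A ≤ C := g6.mpr (by omega)
      refine ⟨[D, B, C, A], pat4_iff.mpr ⟨D, B, C, A, rfl, by omega, by omega, by omega,
        by omega, by omega, by omega⟩,
        (List.Perm.swap D B [A, C]).trans (((List.Perm.swap C A []).cons B).cons D),
        fun i => ?_⟩
      rw [hasInv4, hasInv4]; omega
    · intro x hx
      rw [pat4_iff] at hx
      obtain ⟨D, B, C, A, rfl, g1, g2, g3, g4, g5, g6⟩ := hx
      have f1 : B < D := by omega
      have f2 : C < D := by omega
      have f3 : A < D := by omega
      have f4 : B ≤ C := g4.mpr hbc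
      have f5 : A < B := by omega
      have f6 : A < C := by omega
      refine ⟨[B, D, A, C], pat4_iff.mpr ⟨B, D, A, C, rfl, by omega, by omega, by omega,
        by omega, by omega, by omega⟩,
        (List.Perm.swap D B [A, C]).trans (((List.Perm.swap C A []).cons B).cons D),
        fun i => ?_⟩
      rw [hasInv4, hasInv4]; omega

end
section
open scoped Classical

lemma getD_take' {x : List ℕ} {n p : ℕ} (h : p < n) :
    (x.take n).getD p 0 = x.getD p 0 := by
  by_cases hp : p < x.length
  · rw [List.getD_eq_getElem _ 0 (by simp; omega), List.getD_eq_getElem _ 0 hp]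
    simp [List.getElem_take]
  · rw [List.getD_eq_default _ 0 (by simp; omega), List.getD_eq_default _ 0 (by omega)]

lemma getD_drop' {x : List ℕ} {n q : ℕ} :
    (x.drop n).getD q 0 = x.getD (n + q) 0 := by
  by_cases hq : n + q < x.length
  · rw [List.getD_eq_getElem _ 0 (by simp; omega), List.getD_eq_getElem _ 0 hq]
    rw [List.getElem_drop]
  · rw [List.getD_eq_default _ 0 (by simp; omega), List.getD_eq_default _ 0 (by omega)]

lemma pat_take {x u u' : List ℕ} (h : Pat x (u ++ u')) : Pat (x.take u.length) u := by
  have hlen := h.1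
  rw [List.length_append] at hlen
  constructor
  · simp; omega
  · intro p q hpq hq
    rw [getD_take' (by omega), getD_take' (by omega)]
    rw [h.2 p q hpq (by rw [List.length_append]; omega)]
    rw [List.getD_append _ _ _ _ (by omega), List.getD_append _ _ _ _ hq]

lemma pat_drop {x u u' : List ℕ} (h : Pat x (u ++ u')) : Pat (x.drop u.length) u' := by
  have hlen := h.1
  rw [List.length_append] at hlen
  constructor
  · simp; omega
  · intro p q hpq hq
    rw [getD_drop', getD_drop']
    rw [h.2 (u.length + p) (u.length + q) (by omega) (by rw [List.length_append]; omega)]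
    rw [List.getD_append_right _ _ _ _ (by omega), List.getD_append_right _ _ _ _ (by omega)]
    have e1 : u.length + p - u.length = p := by omega
    have e2 : u.length + q - u.length = q := by omega
    rw [e1, e2]

lemma pat_cross {x u u' : List ℕ} (h : Pat x (u ++ u')) :
    ∀ p q, p < u.length → q < u'.length →
      ((x.take u.length).getD p 0 ≤ (x.drop u.length).getD q 0 ↔
        u.getD p 0 ≤ u'.getD q 0) := by
  have hlen := h.1
  rw [List.length_append] at hlen
  intro p q hp hq
  rw [getD_take' (by omega), getD_drop']
  rw [h.2 p (u.length + q) (by omega) (by rw [List.length_append]; omega)]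
  rw [List.getD_append _ _ _ _ hp, List.getD_append_right _ _ _ _ (by omega)]
  have e : u.length + q - u.length = q := by omega
  rw [e]

lemma pat_glue {x₁ x₂ v v' : List ℕ} (h1 : Pat x₁ v) (h2 : Pat x₂ v')
    (hcross : ∀ p q, p < v.length → q < v'.length →
      (x₁.getD p 0 ≤ x₂.getD q 0 ↔ v.getD p 0 ≤ v'.getD q 0)) :
    Pat (x₁ ++ x₂) (v ++ v') := by
  have e1 := h1.1
  have e2 := h2.1
  constructor
  · rw [List.length_append, List.length_append]; omega
  · intro p q hpq hq
    rw [List.length_append] at hq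
    rcases Nat.lt_or_ge q v.length with h | h
    · rw [List.getD_append _ _ _ _ (by omega), List.getD_append _ _ _ _ (by omega),
        List.getD_append _ _ _ _ (by omega), List.getD_append _ _ _ _ h]
      exact h1.2 p q hpq h
    · rcases Nat.lt_or_ge p v.length with h' | h'
      · rw [List.getD_append _ _ _ _ (by omega), List.getD_append _ _ _ _ h',
          List.getD_append_right _ _ _ _ (by omega), List.getD_append_right _ _ _ _ h]
        have hx : q - x₁.length = q - v.length := by omega
        rw [hx]
        exact hcross p (q - v.length) h' (by omega)
      · rw [List.getD_append_right _ _ _ _ (by omega), List.getD_append_right _ _ _ _ h',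
          List.getD_append_right _ _ _ _ (by omega), List.getD_append_right _ _ _ _ h]
        have hx : q - x₁.length = q - v.length := by omega
        have hy : p - x₁.length = p - v.length := by omega
        rw [hx, hy]
        exact h2.2 (p - v.length) (q - v.length) (by omega) (by omega)

lemma cnt_eq_of_rk_iff {w : List ℕ} {A B : ℕ} (hA : A ≤ w.length) (hB : B ≤ w.length)
    (h : ∀ p < w.length, (rk w p < A ↔ rk w p < B)) : A = B := by
  rcases Nat.lt_trichotomy A B with hlt | heq | hgt
  · obtain ⟨p, hp, hrk⟩ := rk_surj (y := w) (k := A) (by omega)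
    have := (h p hp).mpr (by omega)
    omega
  · exact heq
  · obtain ⟨p, hp, hrk⟩ := rk_surj (y := w) (k := B) (by omega)
    have := (h p hp).mp (by omega)
    omega

lemma cross_transfer {u v u' v' x₁ x'₁ x₂ x'₂ : List ℕ}
    (huv : u.Perm v) (hu'v' : u'.Perm v')
    (p1 : Pat x₁ u) (p1' : Pat x'₁ v) (e1 : x₁.Perm x'₁)
    (p2 : Pat x₂ u') (p2' : Pat x'₂ v') (e2 : x₂.Perm x'₂)
    (hcross : ∀ p q, p < u.length → q < u'.length →
      (x₁.getD p 0 ≤ x₂.getD q 0 ↔ u.getD p 0 ≤ u'.getD q 0)) :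
    ∀ p q, p < v.length → q < v'.length →
      (x'₁.getD p 0 ≤ x'₂.getD q 0 ↔ v.getD p 0 ≤ v'.getD q 0) := by
  have luv : u.length = v.length := huv.length_eq
  have lu'v' : u'.length = v'.length := hu'v'.length_eq
  have l1 : x₁.length = u.length := p1.1
  have l2 : x₂.length = u'.length := p2.1
  have l1' : x'₁.length = v.length := p1'.1
  have l2' : x'₂.length = v'.length := p2'.1
  -- Step A
  have stepA : ∀ q < u'.length, cntle x₁ (x₂.getD q 0) = cntle u (u'.getD q 0) := by
    intro q hq
    apply cnt_eq_of_rk_iff (w := u)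
    · rw [← l1]; exact cntle_le_length _ _
    · exact cntle_le_length _ _
    · intro p hp
      have t1 : x₁.getD p 0 ≤ x₂.getD q 0 ↔ rk x₁ p < cntle x₁ (x₂.getD q 0) :=
        le_iff_rk_lt_cntle (by omega) _
      have t2 : u.getD p 0 ≤ u'.getD q 0 ↔ rk u p < cntle u (u'.getD q 0) :=
        le_iff_rk_lt_cntle hp _
      have t3 : rk x₁ p = rk u p := rk_pat p1 hp
      have t4 := hcross p q hp hq
      rw [← t2, ← t4, t1, t3]
  -- Step B
  have stepB : ∀ q < v'.length, cntle x₁ (x'₂.getD q 0) = cntle u (v'.getD q 0) := by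
    intro q hq
    have hk : rk x'₂ q = rk v' q := rk_pat p2' hq
    have hklt : rk v' q < v'.length := by
      have := rk_lt_length (y := v') (p := q) (by omega)
      omega
    obtain ⟨r, hr, hrk⟩ := rk_surj (y := u') (k := rk v' q) (by omega)
    have hval1 : x'₂.getD q 0 = x₂.getD r 0 := by
      apply val_eq_of_rk_eq e2.symm (by omega) (by omega)
      rw [hk, ← hrk, rk_pat p2 hr]
    have hval2 : v'.getD q 0 = u'.getD r 0 := by
      apply val_eq_of_rk_eq hu'v'.symm (by omega) (by omega)
      rw [← hrk]
    rw [hval1, hval2]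
    exact stepA r hr
  -- Step C
  intro p q hp hq
  have t1 : x'₁.getD p 0 ≤ x'₂.getD q 0 ↔ rk x'₁ p < cntle x'₁ (x'₂.getD q 0) :=
    le_iff_rk_lt_cntle (by omega) _
  have t2 : v.getD p 0 ≤ v'.getD q 0 ↔ rk v p < cntle v (v'.getD q 0) :=
    le_iff_rk_lt_cntle hp _
  have t3 : rk x'₁ p = rk v p := rk_pat p1' hp
  have t4 : cntle x'₁ (x'₂.getD q 0) = cntle x₁ (x'₂.getD q 0) := cntle_perm e1.symm _
  have t5 : cntle u (v'.getD q 0) = cntle v (v'.getD q 0) := cntle_perm huv _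
  rw [t1, t2, t3, t4, stepB q hq, t5]

lemma phi_half {u v u' v' : List ℕ} (h : Phi u v) (h' : Phi u' v') :
    ∀ x, Pat x (u ++ u') → ∃ x', Pat x' (v ++ v') ∧ x.Perm x' ∧
      ∀ i, (HasInv i x ↔ HasInv i x') := by
  intro x hx
  have hx1 : Pat (x.take u.length) u := pat_take hx
  have hx2 : Pat (x.drop u.length) u' := pat_drop hx
  obtain ⟨x'₁, q1, e1, i1⟩ := h.2.1 _ hx1
  obtain ⟨x'₂, q2, e2, i2⟩ := h'.2.1 _ hx2
  have hcross := pat_cross hx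
  have hcross' := cross_transfer h.1 h'.1 hx1 q1 e1 hx2 q2 e2 hcross
  have hsplit : x = x.take u.length ++ x.drop u.length := (List.take_append_drop _ x).symm
  refine ⟨x'₁ ++ x'₂, pat_glue q1 q2 hcross', ?_, ?_⟩
  · conv_lhs => rw [hsplit]
    exact e1.append e2
  · intro i
    conv_lhs => rw [hsplit]
    rw [hasInv_append, hasInv_append]
    rw [i1 i, i2 i, e1.mem_iff, e2.mem_iff]

lemma phi_append {u v u' v' : List ℕ} (h : Phi u v) (h' : Phi u' v') :
    Phi (u ++ u') (v ++ v') := by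
  refine ⟨h.1.append h'.1, phi_half h h', ?_⟩
  intro x' hx'
  obtain ⟨z, hz1, hz2, hz3⟩ := phi_half h.symm h'.symm x' hx'
  exact ⟨z, hz1, hz2.symm, fun i => (hz3 i).symm⟩

/-- the hypoplactic congruence implies `Phi`. -/
lemma phi_of_cong {n : ℕ} {u v : List ℕ} (h : HypoCong n u v) : Phi u v := by
  induction h with
  | of hrel => exact phi_rel hrel
  | refl u => exact Phi.refl u
  | symm _ ih => exact ih.symm
  | trans _ _ ih1 ih2 => exact ih1.trans ih2
  | append _ _ ih1 ih2 => exact phi_append ih1 ih2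

end
section
open scoped Classical

/-- the transport map: send `x` to the unique word with pattern class of `v`
and the same multiset of letters as `x`. -/
noncomputable def th (v : List ℕ) (x : List ℕ) : List ℕ :=
  if h : ∃ x', Pat x' v ∧ x.Perm x' then h.choose else x

lemma th_spec {v x : List ℕ} (h : ∃ x', Pat x' v ∧ x.Perm x') :
    Pat (th v x) v ∧ x.Perm (th v x) := by
  rw [th, dif_pos h]
  exact h.choose_spec

lemma th_eq {v x z : List ℕ} (hz : Pat z v) (hperm : x.Perm z) : th v x = z := by
  obtain ⟨h1, h2⟩ := th_spec ⟨z, hz, hperm⟩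
  exact eq_of_pat_perm (h1.trans hz.symm) (h2.symm.trans hperm)

lemma exists_partner {u v x : List ℕ} (hPhi : Phi u v) (hx : Pat x u) :
    ∃ x', Pat x' v ∧ x.Perm x' := by
  obtain ⟨x', a, b, -⟩ := hPhi.2.1 x hx
  exact ⟨x', a, b⟩

lemma sameComp_pat {n : ℕ} {u x : List ℕ} (h : SameComp n u x) : Pat x u := by
  induction h with
  | refl => exact Pat.refl u
  | tail hub hadj ih =>
    obtain ⟨i, he | he⟩ := hadj
    · exact (pat_qf he.2.2).trans ih
    · exact (pat_qf he.2.2).symm.trans ih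

lemma th_transport {u v x y : List ℕ} {n i : ℕ} (hPhi : Phi u v) (hx : Pat x u)
    (he : Edge n i x y) : Edge n i (th v x) (th v y) := by
  obtain ⟨hi1, hi2, hqf⟩ := he
  obtain ⟨x', hx'v, hxx', hiff⟩ := hPhi.2.1 x hx
  have hthx : th v x = x' := th_eq hx'v hxx'
  obtain ⟨y', hy', hyx, hy'x', hyy'⟩ := transport hPhi hx hx'v hxx' hqf
  have hthy : th v y = y' := th_eq (hy'x'.trans hx'v) hyy'
  exact ⟨hi1, hi2, by rw [hthx, hthy]; exact hy'⟩

lemma th_maps {n : ℕ} {u v : List ℕ} (hPhi : Phi u v) :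
    ∀ x, SameComp n u x → SameComp n v (th v x) := by
  intro x h
  induction h with
  | refl =>
    rw [th_eq (Pat.refl v) hPhi.1]
    exact Relation.ReflTransGen.refl
  | @tail b c hub hadj ih =>
    have hb : Pat b u := sameComp_pat hub
    have hc : Pat c u := sameComp_pat (hub.tail hadj)
    obtain ⟨i, he | he⟩ := hadj
    · exact ih.tail ⟨i, Or.inl (th_transport hPhi hb he)⟩
    · exact ih.tail ⟨i, Or.inr (th_transport hPhi hc he)⟩

lemma th_round {u v y : List ℕ} (hPhi : Phi u v) (hy : Pat y v) : th v (th u y) = y := by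
  obtain ⟨z, hz, hperm, -⟩ := hPhi.2.2 y hy
  rw [th_eq hz hperm.symm]
  exact th_eq hy hperm

end
/-- For all `u, v ∈ 𝒜_n^*`, if `u ≡_hypo v` then `u ∼ v`. -/
theorem hypoCong_implies_sim (n : ℕ) (u v : List ℕ) (hu : IsWord n u) (hv : IsWord n v)
    (h : HypoCong n u v) : Sim n u v := by
  classical
  have hPhi := phi_of_cong h
  refine ⟨th v, ⟨⟨?_, ?_, ?_⟩, ?_, ?_⟩, th_eq (Pat.refl v) hPhi.1⟩
  · -- maps to
    intro x hx
    exact th_maps hPhi x hx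
  · -- injective
    intro x hx y hy hxy
    have hpx : Pat x u := sameComp_pat hx
    have hpy : Pat y u := sameComp_pat hy
    have sx := th_spec (exists_partner hPhi hpx)
    have sy := th_spec (exists_partner hPhi hpy)
    refine eq_of_pat_perm (hpx.trans hpy.symm) ?_
    exact (sx.2.trans (by rw [hxy])).trans sy.2.symm
  · -- surjective
    intro y hy
    have hpy : Pat y v := sameComp_pat hy
    refine ⟨th u y, th_maps hPhi.symm y hy, th_round hPhi hpy⟩
  · -- weight preserving
    intro x hx
    have hpx : Pat x u := sameComp_pat hx
    have sx := th_spec (exists_partner hPhi hpx)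
    funext a
    exact (sx.2.count_eq a).symm
  · -- edges
    intro x y hx hy i
    have hpx : Pat x u := sameComp_pat hx
    have hpy : Pat y u := sameComp_pat hy
    constructor
    · exact th_transport hPhi hpx
    · intro he'
      have hthx : Pat (th v x) v := (th_spec (exists_partner hPhi hpx)).1
      have := th_transport hPhi.symm hthx he'
      rwa [th_round hPhi.symm hpx, th_round hPhi.symm hpy] at this

end HypoCrystal
end
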